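/- arXiv:1609.03727 — 5 statements merged into one kernel-verified Lean document; each statement's English description precedes it below -/
import Mathlib

section
/- Every continuous map φ : [0,1] → ℝ² whose range is contained in the segment [0,1] × {0} is approximable by embeddings: for every ε > 0 there is a continuous injective map f : [0,1] → ℝ² with dist(f x, φ x) < ε for all x ∈ [0,1]. -/
/-- Every continuous map of the interval into the plane whose range lies in
the segment [0,1] × {0} is approximable by embeddings. -/
theorem stmt_1 (φ : Set.Icc (0 : ℝ) 1 → ℝ × ℝ) (hφ : Continuous φ)
    (hrange : Set.range φ ⊆ Set.Icc (0 : ℝ) 1 ×ˢ ({0} : Set ℝ)) :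
    ∀ ε > (0 : ℝ), ∃ f : Set.Icc (0 : ℝ) 1 → ℝ × ℝ,
      Continuous f ∧ Function.Injective f ∧ ∀ x, dist (f x) (φ x) < ε := by
  intro ε hε
  refine ⟨fun x => ((φ x).1, (ε / 2) * (x : ℝ)), ?_, ?_, ?_⟩
  · exact ((continuous_fst.comp hφ).prodMk (continuous_const.mul continuous_subtype_val))
  · intro x y hxy
    have h2 : (ε / 2) * (x : ℝ) = (ε / 2) * (y : ℝ) := congrArg Prod.snd hxy
    have : (x : ℝ) = y := by
      have hne : (ε / 2) ≠ 0 := by positivity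
      exact mul_left_cancel₀ hne h2
    exact Subtype.ext this
  · intro x
    have h2 : (φ x).2 = 0 := (hrange ⟨x, rfl⟩).2
    have hx0 : (0:ℝ) ≤ x := x.2.1
    have hx1 : (x:ℝ) ≤ 1 := x.2.2
    rw [Prod.dist_eq]
    simp only [h2, dist_self]
    have : dist ((ε / 2) * (x : ℝ)) 0 < ε := by
      rw [Real.dist_eq, sub_zero, abs_of_nonneg (by positivity)]
      nlinarith
    simpa using max_lt (by simpa using hε) this
end

section
/- For an integer d, the standard d-winding w_d : S¹ → ℂ ≅ ℝ², w_d(z) = z^d (where S¹ = {z ∈ ℂ : |z| = 1}), is approximable by embeddings if and only if d ∈ {-1, 0, 1}. -/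
open Complex Set Real

noncomputable section
namespace Stmt3

lemma min_lip (s x y : ℝ) : |min s x - min s y| ≤ |x - y| := by
  rcases le_total s x with h1 | h1 <;> rcases le_total s y with h2 | h2 <;>
    rw [abs_le] <;> constructor <;>
    simp only [min_eq_left, min_eq_right, h1, h2] <;>
    cases' abs_le.mp (le_refl |x - y|) with hl hr <;> linarith

lemma slit_of_nonneg_re {z : ℂ} (hz : z ≠ 0) (h : 0 ≤ z.re) : z ∈ Complex.slitPlane := by
  rw [Complex.mem_slitPlane_iff]
  rcases lt_or_eq_of_le h with h' | h'
  · exact Or.inl h'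
  · refine Or.inr fun him => hz ?_
    apply Complex.ext <;> simp [← h', him]

lemma near_one_re {z : ℂ} (h : ‖z - 1‖ < 1) : 0 < z.re := by
  have h1 : |(z - 1).re| ≤ ‖z - 1‖ := by
    simpa using Complex.abs_re_le_norm (z - 1)
  have h2 : |z.re - 1| < 1 := by simpa [Complex.sub_re] using lt_of_le_of_lt h1 h
  cases' abs_lt.mp h2 with h3 h4; linarith

lemma near_one_ne {z : ℂ} (h : ‖z - 1‖ < 1) : z ≠ 0 := by
  intro h0; rw [h0] at h; norm_num at h

lemma near_one_slit {z : ℂ} (h : ‖z - 1‖ < 1) : z ∈ Complex.slitPlane :=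
  Complex.mem_slitPlane_iff.mpr (Or.inl (near_one_re h))

lemma exp_arg_I {z : ℂ} (hz : z ≠ 0) : Complex.exp ((z.arg : ℂ) * I) = z / ‖z‖ := by
  have h := Complex.norm_mul_exp_arg_mul_I z
  have habs : ((‖z‖ : ℝ) : ℂ) ≠ 0 := by
    simpa using norm_ne_zero_iff.mpr hz
  rw [eq_div_iff habs, mul_comm]
  exact h

lemma im_int_of_exp_pos {ζ : ℂ} {r : ℝ} (hr : 0 < r) (h : Complex.exp ζ = (r : ℂ)) :
    ∃ n : ℤ, ζ.im = 2 * π * n := by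
  have hre : Real.exp ζ.re = r := by
    have := congrArg norm h
    rwa [Complex.norm_exp, Complex.norm_real, Real.norm_eq_abs, abs_of_pos hr] at this
  have hsplit : ζ = (ζ.re : ℂ) + (ζ.im : ℂ) * I := (Complex.re_add_im ζ).symm
  have hexp : Complex.exp ((ζ.re : ℂ)) * Complex.exp ((ζ.im : ℂ) * I) = r := by
    rw [← Complex.exp_add, ← hsplit, h]
  have hrc : Complex.exp ((ζ.re : ℂ)) = (r : ℂ) := by
    rw [← hre]; exact_mod_cast (Complex.ofReal_exp ζ.re).symm
  have hone : Complex.exp ((ζ.im : ℂ) * I) = 1 := by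
    rw [hrc] at hexp
    have hrc0 : (r : ℂ) ≠ 0 := by exact_mod_cast ne_of_gt hr
    field_simp at hexp
    exact hexp
  obtain ⟨n, hn⟩ := Complex.exp_eq_one_iff.mp hone
  refine ⟨n, ?_⟩
  have hcan : (ζ.im : ℂ) = (n : ℂ) * (2 * π) := by
    have hI : (I : ℂ) ≠ 0 := Complex.I_ne_zero
    have : (ζ.im : ℂ) * I = ((n : ℂ) * (2 * π)) * I := by rw [hn]; ring
    exact mul_right_cancel₀ hI this
  have : ζ.im = (n : ℝ) * (2 * π) := by exact_mod_cast hcan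
  linarith

lemma int_cancel {x y : ℝ} {n : ℤ}
    (hxy : x = y + n * (2 * π)) : x - y = n * (2 * π) := by linarith

lemma exp_I_diff {x y : ℝ}
    (h : Complex.exp ((x : ℂ) * I) = Complex.exp ((y : ℂ) * I)) :
    ∃ n : ℤ, x = y + n * (2 * π) := by
  obtain ⟨n, hn⟩ := Complex.exp_eq_exp_iff_exists_int.mp h
  refine ⟨n, ?_⟩
  have := congrArg Complex.im hn
  simpa using this

lemma angle_eq_of_exp_eq {x y : ℝ}
    (h : Complex.exp ((x : ℂ) * I) = Complex.exp ((y : ℂ) * I)) (hb : |x - y| < 2 * π) :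
    x = y := by
  obtain ⟨n, hn⟩ := exp_I_diff h
  have hb' : |(n : ℝ)| * (2 * π) < 2 * π := by
    rw [hn] at hb
    simpa [abs_mul, abs_of_pos (by positivity : (0:ℝ) < 2 * π)] using hb
  have hlt : |(n : ℝ)| < 1 := by nlinarith [Real.pi_pos]
  have : (n : ℝ) = 0 := by
    have h1 := abs_lt.mp hlt
    have : -1 < n ∧ n < 1 := ⟨by exact_mod_cast h1.1, by exact_mod_cast h1.2⟩
    have : n = 0 := by omega
    exact_mod_cast this
  rw [hn, this]; ring

lemma angle_shift_of_exp_eq {x y : ℝ}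
    (h : Complex.exp ((x : ℂ) * I) = Complex.exp ((y : ℂ) * I))
    (h0 : 0 < x - y) (h4 : x - y < 4 * π) : x = y + 2 * π := by
  obtain ⟨n, hn⟩ := exp_I_diff h
  have hn' : x - y = (n:ℝ) * (2 * π) := by linarith
  have hpi := Real.pi_pos
  have h0' : (0:ℝ) < (n:ℝ) := by nlinarith
  have h2' : (n:ℝ) < 2 := by nlinarith
  have : n = 1 := by
    have : 0 < n ∧ n < 2 := ⟨by exact_mod_cast h0', by exact_mod_cast h2'⟩
    omega
  rw [hn, this]; push_cast; ring

/-- Continuous functions into `2πℤ` on an interval take equal endpoint values. -/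
lemma const_of_int_valued {k : ℝ → ℝ} {a b : ℝ} (hab : a ≤ b)
    (hk : ContinuousOn k (Icc a b))
    (h : ∀ x ∈ Icc a b, ∃ n : ℤ, k x = 2 * π * n) : k a = k b := by
  have ha : a ∈ Icc a b := ⟨le_refl a, hab⟩
  have hb : b ∈ Icc a b := ⟨hab, le_refl b⟩
  obtain ⟨na, hna⟩ := h a ha
  obtain ⟨nb, hnb⟩ := h b hb
  by_contra hne
  have hpi := Real.pi_pos
  -- midpoint value π(na+nb) ... use value between: pick y strictly between, odd multiple of π
  rcases lt_or_gt_of_ne hne with hlt | hlt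
  · -- k a < k b, so na < nb, pick y = k a + π
    have hnab : (na:ℝ) < nb := by nlinarith [hna ▸ hnb ▸ hlt]
    have hnab' : na < nb := by exact_mod_cast hnab
    have hy : k a + π ∈ Icc (k a) (k b) := by
      constructor
      · linarith
      · have : (na:ℝ) + 1 ≤ nb := by exact_mod_cast hnab'
        rw [hna, hnb]; nlinarith
    obtain ⟨x, hx, hkx⟩ := intermediate_value_Icc hab hk hy
    obtain ⟨m, hm⟩ := h x hx
    rw [hm, hna] at hkx
    have : (2*m : ℝ) = 2*na + 1 := by nlinarith
    have : (2*m : ℤ) = 2*na + 1 := by exact_mod_cast this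
    omega
  · have hnab : (nb:ℝ) < na := by nlinarith [hna ▸ hnb ▸ hlt]
    have hnab' : nb < na := by exact_mod_cast hnab
    have hy : k b + π ∈ Icc (k b) (k a) := by
      constructor
      · linarith
      · have : (nb:ℝ) + 1 ≤ na := by exact_mod_cast hnab'
        rw [hna, hnb]; nlinarith
    obtain ⟨x, hx, hkx⟩ := intermediate_value_Icc' hab hk hy
    obtain ⟨m, hm⟩ := h x hx
    rw [hm, hnb] at hkx
    have : (2*m : ℝ) = 2*nb + 1 := by nlinarith
    have : (2*m : ℤ) = 2*nb + 1 := by exact_mod_cast this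
    omega

lemma prod_range_div₀ (g : ℕ → ℂ) : ∀ n : ℕ, (∀ i, i ≤ n → g i ≠ 0) →
    (∏ i ∈ Finset.range n, (g (i+1) / g i)) = g n / g 0
  | 0, h => by simp [div_self (h 0 le_rfl)]
  | (n+1), h => by
    rw [Finset.prod_range_succ, prod_range_div₀ g n (fun i hi => h i (Nat.le_succ_of_le hi))]
    have h0 := h 0 (Nat.zero_le _)
    have hn := h n (Nat.le_succ n)
    field_simp


/-- A nonvanishing continuous function on a closed rectangle admits a continuous logarithm. -/
lemma exists_log_rect {a b p q : ℝ} (hab : a ≤ b) (hpq : p ≤ q)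
    (F : ℝ → ℝ → ℂ)
    (hF : ContinuousOn (fun x : ℝ × ℝ => F x.1 x.2) (Icc a b ×ˢ Icc p q))
    (hne : ∀ s ∈ Icc a b, ∀ t ∈ Icc p q, F s t ≠ 0) :
    ∃ L : ℝ → ℝ → ℂ,
      (∀ s ∈ Icc a b, ∀ t ∈ Icc p q, Complex.exp (L s t) = F s t) ∧
      ContinuousOn (fun x : ℝ × ℝ => L x.1 x.2) (Icc a b ×ˢ Icc p q) := by
  classical
  set K : Set (ℝ × ℝ) := Icc a b ×ˢ Icc p q with hK
  have hKc : IsCompact K := (isCompact_Icc).prod isCompact_Icc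
  have hKne : K.Nonempty := ⟨(a, p), by
    constructor <;> simp [hab, hpq]⟩
  have hne' : ∀ x ∈ K, F x.1 x.2 ≠ 0 := fun x hx => hne x.1 hx.1 x.2 hx.2
  -- minimum of ‖F‖
  obtain ⟨x₀, hx₀K, hmin⟩ := hKc.exists_isMinOn hKne hF.norm
  set m : ℝ := ‖F x₀.1 x₀.2‖ with hm
  have hm0 : 0 < m := norm_pos_iff.mpr (hne' x₀ hx₀K)
  have hmle : ∀ x ∈ K, m ≤ ‖F x.1 x.2‖ := fun x hx => hmin hx
  -- uniform continuity
  have huc := hKc.uniformContinuousOn_of_continuous hF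
  rw [Metric.uniformContinuousOn_iff] at huc
  obtain ⟨δ, hδ0, hδ⟩ := huc m hm0
  -- choose n
  obtain ⟨n₀, hn₀⟩ := exists_nat_gt (max ((b - a) / δ) ((q - p) / δ))
  set n : ℕ := n₀ + 1 with hn
  have hnpos : (0:ℝ) < n := by rw [hn]; positivity
  have hnn : (n₀:ℝ) < n := by rw [hn]; push_cast; linarith
  have hsb : (b - a) / n < δ := by
    have h1 : (b - a) / δ < n := lt_trans (lt_of_le_of_lt (le_max_left _ _) hn₀) hnn
    rw [div_lt_iff₀ hnpos]
    rw [div_lt_iff₀ hδ0] at h1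
    linarith
  have htb : (q - p) / n < δ := by
    have h1 : (q - p) / δ < n := lt_trans (lt_of_le_of_lt (le_max_right _ _) hn₀) hnn
    rw [div_lt_iff₀ hnpos]
    rw [div_lt_iff₀ hδ0] at h1
    linarith
  set ds : ℝ := (b - a) / n with hds
  set dt : ℝ := (q - p) / n with hdt
  have hds0 : 0 ≤ ds := div_nonneg (by linarith) hnpos.le
  have hdt0 : 0 ≤ dt := div_nonneg (by linarith) hnpos.le
  have hnds : (n:ℝ) * ds = b - a := by
    rw [hds]; field_simp
  have hndt : (n:ℝ) * dt = q - p := by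
    rw [hdt]; field_simp
  set sI : ℕ → ℝ := fun i => a + i * ds with hsI
  set tJ : ℕ → ℝ := fun j => p + j * dt with htJ
  have hsImem : ∀ i : ℕ, (i:ℝ) ≤ n → sI i ∈ Icc a b := by
    intro i hi
    have h0 := mul_nonneg (Nat.cast_nonneg i) hds0
    have h1 := mul_le_mul_of_nonneg_right hi hds0
    constructor
    · simp only [hsI]; linarith
    · simp only [hsI]; linarith
  have htJmem : ∀ j : ℕ, (j:ℝ) ≤ n → tJ j ∈ Icc p q := by
    intro j hj
    have h0 := mul_nonneg (Nat.cast_nonneg j) hdt0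
    have h1 := mul_le_mul_of_nonneg_right hj hdt0
    constructor
    · simp only [htJ]; linarith
    · simp only [htJ]; linarith
  have hminmem : ∀ {s : ℝ}, s ∈ Icc a b → ∀ i : ℕ, (i:ℝ) ≤ n → min s (sI i) ∈ Icc a b := by
    intro s hs i hi
    exact ⟨le_min hs.1 (hsImem i hi).1, le_trans (min_le_left _ _) hs.2⟩
  have hminmem' : ∀ {t : ℝ}, t ∈ Icc p q → ∀ j : ℕ, (j:ℝ) ≤ n → min t (tJ j) ∈ Icc p q := by
    intro t ht j hj
    exact ⟨le_min ht.1 (htJmem j hj).1, le_trans (min_le_left _ _) ht.2⟩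
  -- the key closeness of consecutive grid quotients
  have hquot : ∀ (x y : ℝ × ℝ), x ∈ K → y ∈ K → dist x y < δ →
      ‖F x.1 x.2 / F y.1 y.2 - 1‖ < 1 := by
    intro x y hx hy hd
    have h0 : F y.1 y.2 ≠ 0 := hne' y hy
    have h1 : F x.1 x.2 / F y.1 y.2 - 1 = (F x.1 x.2 - F y.1 y.2) / F y.1 y.2 := by
      field_simp
    rw [h1, norm_div, div_lt_one (norm_pos_iff.mpr (hne' y hy))]
    calc ‖F x.1 x.2 - F y.1 y.2‖ = dist (F x.1 x.2) (F y.1 y.2) := (dist_eq_norm _ _).symm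
      _ < m := hδ x hx y hy hd
      _ ≤ ‖F y.1 y.2‖ := hmle y hy
  -- define L
  set L : ℝ → ℝ → ℂ := fun s t =>
    Complex.log (F a p)
    + (∑ i ∈ Finset.range n, Complex.log (F (min s (sI (i+1))) p / F (min s (sI i)) p))
    + (∑ j ∈ Finset.range n, Complex.log (F s (min t (tJ (j+1))) / F s (min t (tJ j)))) with hL
  -- quotient terms: closeness
  have hq1 : ∀ (s : ℝ), s ∈ Icc a b → ∀ i : ℕ, i < n →
      ‖F (min s (sI (i+1))) p / F (min s (sI i)) p - 1‖ < 1 := by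
    intro s hs i hi
    have hi1 : ((i+1:ℕ):ℝ) ≤ n := by exact_mod_cast Nat.succ_le_of_lt hi
    have hi0 : ((i:ℕ):ℝ) ≤ n := le_trans (by push_cast; linarith) hi1
    have hp : p ∈ Icc p q := ⟨le_refl _, hpq⟩
    refine hquot (min s (sI (i+1)), p) (min s (sI i), p) ⟨hminmem hs _ hi1, hp⟩ ⟨hminmem hs _ hi0, hp⟩ ?_
    rw [Prod.dist_eq]
    simp only [dist_self]
    have hdd : dist (min s (sI (i+1))) (min s (sI i)) ≤ ds := by
      rw [Real.dist_eq]
      refine le_trans (min_lip s _ _) ?_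
      have hstep : sI (i+1) - sI i = ds := by simp only [hsI]; push_cast; ring
      exact le_of_eq (by rw [hstep, _root_.abs_of_nonneg hds0])
    have : max (dist (min s (sI (i+1))) (min s (sI i))) 0 < δ := by
      rw [max_eq_left dist_nonneg]
      exact lt_of_le_of_lt hdd hsb
    exact this
  have hq2 : ∀ (s : ℝ), s ∈ Icc a b → ∀ (t : ℝ), t ∈ Icc p q → ∀ j : ℕ, j < n →
      ‖F s (min t (tJ (j+1))) / F s (min t (tJ j)) - 1‖ < 1 := by
    intro s hs t ht j hj
    have hj1 : ((j+1:ℕ):ℝ) ≤ n := by exact_mod_cast Nat.succ_le_of_lt hj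
    have hj0 : ((j:ℕ):ℝ) ≤ n := le_trans (by push_cast; linarith) hj1
    refine hquot (s, min t (tJ (j+1))) (s, min t (tJ j)) ⟨hs, hminmem' ht _ hj1⟩ ⟨hs, hminmem' ht _ hj0⟩ ?_
    rw [Prod.dist_eq]
    simp only [dist_self]
    have hdd : dist (min t (tJ (j+1))) (min t (tJ j)) ≤ dt := by
      rw [Real.dist_eq]
      refine le_trans (min_lip t _ _) ?_
      have hstep : tJ (j+1) - tJ j = dt := by simp only [htJ]; push_cast; ring
      exact le_of_eq (by rw [hstep, _root_.abs_of_nonneg hdt0])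
    have : max 0 (dist (min t (tJ (j+1))) (min t (tJ j))) < δ := by
      rw [max_eq_right dist_nonneg]
      exact lt_of_le_of_lt hdd htb
    exact this
  refine ⟨L, ?_, ?_⟩
  · -- exp L = F
    intro s hs t ht
    have hFap : F a p ≠ 0 := hne a ⟨le_refl _, hab⟩ p ⟨le_refl _, hpq⟩
    have hFsp : ∀ i : ℕ, (i:ℝ) ≤ n → F (min s (sI i)) p ≠ 0 := fun i hi =>
      hne _ (hminmem hs i hi) p ⟨le_refl _, hpq⟩
    have hFst : ∀ j : ℕ, (j:ℝ) ≤ n → F s (min t (tJ j)) ≠ 0 := fun j hj =>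
      hne s hs _ (hminmem' ht j hj)
    rw [hL]
    simp only
    rw [Complex.exp_add, Complex.exp_add, Complex.exp_sum, Complex.exp_sum,
        Complex.exp_log hFap]
    have e1 : ∀ i ∈ Finset.range n,
        Complex.exp (Complex.log (F (min s (sI (i+1))) p / F (min s (sI i)) p))
        = F (min s (sI (i+1))) p / F (min s (sI i)) p := by
      intro i hi
      rw [Finset.mem_range] at hi
      exact Complex.exp_log (near_one_ne (hq1 s hs i hi))
    have e2 : ∀ j ∈ Finset.range n,
        Complex.exp (Complex.log (F s (min t (tJ (j+1))) / F s (min t (tJ j))))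
        = F s (min t (tJ (j+1))) / F s (min t (tJ j)) := by
      intro j hj
      rw [Finset.mem_range] at hj
      exact Complex.exp_log (near_one_ne (hq2 s hs t ht j hj))
    rw [Finset.prod_congr rfl e1, Finset.prod_congr rfl e2]
    have hInat : ∀ i : ℕ, i ≤ n → (i:ℝ) ≤ n := fun i hi => by exact_mod_cast hi
    rw [prod_range_div₀ (fun i => F (min s (sI i)) p) n (fun i hi => hFsp i (hInat i hi)),
        prod_range_div₀ (fun j => F s (min t (tJ j))) n (fun j hj => hFst j (hInat j hj))]
    have hsn : sI n = b := by
      simp only [hsI]; linarith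
    have htn : tJ n = q := by
      simp only [htJ]; linarith
    have h1 : min s (sI n) = s := by rw [hsn]; exact min_eq_left hs.2
    have h2 : min s (sI 0) = a := by
      simp only [hsI]; simp; exact hs.1
    have h3 : min t (tJ n) = t := by rw [htn]; exact min_eq_left ht.2
    have h4 : min t (tJ 0) = p := by
      simp only [htJ]; simp; exact ht.1
    rw [h1, h2, h3, h4]
    have hFsp' : F s p ≠ 0 := hne s hs p ⟨le_refl _, hpq⟩
    field_simp
  · -- continuity
    rw [hL]
    apply ContinuousOn.add
    apply ContinuousOn.add
    · exact continuousOn_const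
    · apply continuousOn_finset_sum
      intro i hi
      rw [Finset.mem_range] at hi
      have hi1 : ((i+1:ℕ):ℝ) ≤ n := by exact_mod_cast Nat.succ_le_of_lt hi
      have hi0 : ((i:ℕ):ℝ) ≤ n := by push_cast at hi1 ⊢; linarith
      have hmap1 : MapsTo (fun x : ℝ × ℝ => (min x.1 (sI (i+1)), p)) K K := by
        intro x hx; exact ⟨hminmem hx.1 _ hi1, ⟨le_refl _, hpq⟩⟩
      have hmap0 : MapsTo (fun x : ℝ × ℝ => (min x.1 (sI i), p)) K K := by
        intro x hx; exact ⟨hminmem hx.1 _ hi0, ⟨le_refl _, hpq⟩⟩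
      have hc1 : ContinuousOn (fun x : ℝ × ℝ => F (min x.1 (sI (i+1))) p) K :=
        hF.comp (Continuous.continuousOn (by fun_prop)) hmap1
      have hc0 : ContinuousOn (fun x : ℝ × ℝ => F (min x.1 (sI i)) p) K :=
        hF.comp (Continuous.continuousOn (by fun_prop)) hmap0
      refine ContinuousOn.clog (hc1.div hc0 ?_) ?_
      · intro x hx
        exact hne _ (hminmem hx.1 _ hi0) p ⟨le_refl _, hpq⟩
      · intro x hx
        exact near_one_slit (hq1 x.1 hx.1 i hi)
    · apply continuousOn_finset_sum
      intro j hj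
      rw [Finset.mem_range] at hj
      have hj1 : ((j+1:ℕ):ℝ) ≤ n := by exact_mod_cast Nat.succ_le_of_lt hj
      have hj0 : ((j:ℕ):ℝ) ≤ n := by push_cast at hj1 ⊢; linarith
      have hmap1 : MapsTo (fun x : ℝ × ℝ => (x.1, min x.2 (tJ (j+1)))) K K := by
        intro x hx; exact ⟨hx.1, hminmem' hx.2 _ hj1⟩
      have hmap0 : MapsTo (fun x : ℝ × ℝ => (x.1, min x.2 (tJ j))) K K := by
        intro x hx; exact ⟨hx.1, hminmem' hx.2 _ hj0⟩
      have hc1 : ContinuousOn (fun x : ℝ × ℝ => F x.1 (min x.2 (tJ (j+1)))) K :=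
        hF.comp (Continuous.continuousOn (by fun_prop)) hmap1
      have hc0 : ContinuousOn (fun x : ℝ × ℝ => F x.1 (min x.2 (tJ j))) K :=
        hF.comp (Continuous.continuousOn (by fun_prop)) hmap0
      refine ContinuousOn.clog (hc1.div hc0 ?_) ?_
      · intro x hx
        exact hne _ hx.1 _ (hminmem' hx.2 _ hj0)
      · intro x hx
        exact near_one_slit (hq2 x.1 hx.1 x.2 hx.2 j hj)

/-- Leg lift identities -/
lemma legA_exp {z : ℂ} (hz : z ≠ 0) :
    Complex.exp ((((-I * z).arg + π/2 : ℝ) : ℂ) * I) = z / ‖z‖ := by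
  have h1 : Complex.exp (((π/2 : ℝ) : ℂ) * I) = I := by
    rw [Complex.exp_mul_I, ← Complex.ofReal_cos, ← Complex.ofReal_sin,
      Real.cos_pi_div_two, Real.sin_pi_div_two]
    simp
  have hz' : -I * z ≠ 0 := by
    simp [Complex.I_ne_zero, hz]
  have h2 := exp_arg_I hz'
  have hnorm : ‖-I * z‖ = ‖z‖ := by
    rw [norm_mul]; simp
  have hsplit : ((((-I * z).arg + π/2 : ℝ) : ℂ) * I)
      = ((-I * z).arg : ℂ) * I + ((π/2 : ℝ) : ℂ) * I := by push_cast; ring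
  rw [hsplit, Complex.exp_add, h2, h1, hnorm]
  have hzn : ((‖z‖ : ℝ) : ℂ) ≠ 0 := by
    exact_mod_cast norm_ne_zero_iff.mpr hz
  field_simp
  have hII : -(I * z * I) = z := by
    calc -(I * z * I) = -(I * I) * z := by ring
      _ = z := by rw [Complex.I_mul_I]; ring
  simp [Complex.I_sq]

lemma legB_exp {z : ℂ} (hz : z ≠ 0) :
    Complex.exp (((z.arg : ℝ) : ℂ) * I) = z / ‖z‖ := exp_arg_I hz

lemma legC_exp {z : ℂ} (hz : z ≠ 0) :
    Complex.exp ((((I * z).arg - π/2 : ℝ) : ℂ) * I) = z / ‖z‖ := by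
  have h1 : Complex.exp (-(((π/2 : ℝ) : ℂ) * I)) = -I := by
    rw [Complex.exp_neg]
    rw [Complex.exp_mul_I, ← Complex.ofReal_cos, ← Complex.ofReal_sin,
      Real.cos_pi_div_two, Real.sin_pi_div_two]
    simp
  have hz' : I * z ≠ 0 := by simp [Complex.I_ne_zero, hz]
  have h2 := exp_arg_I hz'
  have hnorm : ‖I * z‖ = ‖z‖ := by rw [norm_mul]; simp
  have hsplit : ((((I * z).arg - π/2 : ℝ) : ℂ) * I)
      = ((I * z).arg : ℂ) * I + -(((π/2 : ℝ) : ℂ) * I) := by push_cast; ring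
  rw [hsplit, Complex.exp_add, h2, h1, hnorm]
  have hzn : ((‖z‖ : ℝ) : ℂ) ≠ 0 := by exact_mod_cast norm_ne_zero_iff.mpr hz
  field_simp
  have hII : -(I * z * I) = z := by
    calc -(I * z * I) = -(I * I) * z := by ring
      _ = z := by rw [Complex.I_mul_I]; ring
  simp [Complex.I_sq]

lemma legD_exp {z : ℂ} (hz : z ≠ 0) :
    Complex.exp ((((-z).arg - π : ℝ) : ℂ) * I) = z / ‖z‖ := by
  have h1 : Complex.exp (-(((π : ℝ) : ℂ) * I)) = -1 := by
    rw [Complex.exp_neg, Complex.exp_pi_mul_I]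
    norm_num
  have hz' : -z ≠ 0 := neg_ne_zero.mpr hz
  have h2 := exp_arg_I hz'
  have hnorm : ‖-z‖ = ‖z‖ := norm_neg z
  have hsplit : ((((-z).arg - π : ℝ) : ℂ) * I)
      = ((-z).arg : ℂ) * I + -(((π : ℝ) : ℂ) * I) := by push_cast; ring
  rw [hsplit, Complex.exp_add, h2, h1, hnorm]
  have hzn : ((‖z‖ : ℝ) : ℂ) ≠ 0 := by exact_mod_cast norm_ne_zero_iff.mpr hz
  field_simp

/-- The crossing lemma: a path going left-to-right must meet a path going bottom-to-top. -/
lemma crossing {a b p q : ℝ} (hab : a ≤ b) (hpq : p ≤ q) {u v : ℝ → ℂ}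
    (hu : ContinuousOn u (Icc a b)) (hv : ContinuousOn v (Icc p q))
    (h1 : ∀ s ∈ Icc a b, (v p).im ≤ (u s).im)
    (h2 : ∀ s ∈ Icc a b, (u s).im ≤ (v q).im)
    (h3 : ∀ t ∈ Icc p q, (u a).re ≤ (v t).re)
    (h4 : ∀ t ∈ Icc p q, (v t).re ≤ (u b).re) :
    ∃ s ∈ Icc a b, ∃ t ∈ Icc p q, u s = v t := by
  by_contra hcon
  push_neg at hcon
  have ha : a ∈ Icc a b := ⟨le_refl _, hab⟩
  have hb : b ∈ Icc a b := ⟨hab, le_refl _⟩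
  have hp : p ∈ Icc p q := ⟨le_refl _, hpq⟩
  have hq : q ∈ Icc p q := ⟨hpq, le_refl _⟩
  have hG : ∀ s ∈ Icc a b, ∀ t ∈ Icc p q, u s - v t ≠ 0 := by
    intro s hs t ht
    exact sub_ne_zero.mpr (hcon s hs t ht)
  obtain ⟨L, hLexp, hLcont⟩ := exists_log_rect hab hpq (fun s t => u s - v t)
    ((hu.comp continuous_fst.continuousOn (fun x hx => hx.1)).sub
      (hv.comp continuous_snd.continuousOn (fun x hx => hx.2)))
    hG
  -- abbreviations for the four "arg-lift" leg functions
  set A1 : ℝ → ℝ := fun s => (-I * (u s - v p)).arg + π/2 with hA1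
  set A2 : ℝ → ℝ := fun t => (u b - v t).arg with hA2
  set A3 : ℝ → ℝ := fun s => (I * (u s - v q)).arg - π/2 with hA3
  set A4 : ℝ → ℝ := fun t => (-(u a - v t)).arg - π with hA4
  -- each `k` function is 2πℤ-valued and continuous, hence constant.
  have key : ∀ (k : ℝ → ℝ) (c d : ℝ), c ≤ d → ContinuousOn k (Icc c d) →
      (∀ x ∈ Icc c d, ∃ n : ℤ, k x = 2 * π * n) → k c = k d := fun k c d h hk hint =>
    const_of_int_valued h hk hint
  -- generic fact: (L ...).im - A = 2π n when exp(L) = z and exp(A*I) = z/|z|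
  have hval : ∀ (ζ : ℂ) (z : ℂ), z ≠ 0 → Complex.exp ζ = z →
      ∀ (A : ℝ), Complex.exp ((A : ℂ) * I) = z / ‖z‖ → ∃ n : ℤ, ζ.im - A = 2 * π * n := by
    intro ζ z hz hexp A hA
    have hnz : (0:ℝ) < ‖z‖ := norm_pos_iff.mpr hz
    have hdiv : Complex.exp (ζ - (A : ℂ) * I) = ((‖z‖ : ℝ) : ℂ) := by
      rw [Complex.exp_sub, hexp, hA]
      have : ((‖z‖ : ℝ) : ℂ) ≠ 0 := by exact_mod_cast ne_of_gt hnz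
      field_simp
    obtain ⟨n, hn⟩ := im_int_of_exp_pos hnz hdiv
    refine ⟨n, ?_⟩
    simpa using hn
  -- continuity of L restricted to boundary lines
  have hLp : ContinuousOn (fun s => L s p) (Icc a b) :=
    hLcont.comp (Continuous.continuousOn (continuous_id.prodMk continuous_const)) (fun s hs => ⟨hs, hp⟩)
  have hLq : ContinuousOn (fun s => L s q) (Icc a b) :=
    hLcont.comp (Continuous.continuousOn (continuous_id.prodMk continuous_const)) (fun s hs => ⟨hs, hq⟩)
  have hLa : ContinuousOn (fun t => L a t) (Icc p q) :=
    hLcont.comp (Continuous.continuousOn (continuous_const.prodMk continuous_id)) (fun t ht => ⟨ha, ht⟩)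
  have hLb : ContinuousOn (fun t => L b t) (Icc p q) :=
    hLcont.comp (Continuous.continuousOn (continuous_const.prodMk continuous_id)) (fun t ht => ⟨hb, ht⟩)
  -- continuity of arg-legs
  have hargA1 : ContinuousOn A1 (Icc a b) := by
    apply ContinuousOn.add _ continuousOn_const
    intro s hs
    have hz := hG s hs p hp
    have hzs : -I * (u s - v p) ∈ Complex.slitPlane := by
      apply slit_of_nonneg_re (by simp [Complex.I_ne_zero, hz])
      have : (-I * (u s - v p)).re = (u s - v p).im := by simp [Complex.mul_re]
      rw [this, Complex.sub_im]
      linarith [h1 s hs]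
    have hin : ContinuousWithinAt (fun y : ℝ => -I * (u y - v p)) (Icc a b) s :=
      (continuousOn_const.mul (hu.sub continuousOn_const)) s hs
    exact ContinuousAt.comp_continuousWithinAt (f := fun y : ℝ => -I * (u y - v p)) (x := s)
      (Complex.continuousAt_arg hzs) hin
  have hargA2 : ContinuousOn A2 (Icc p q) := by
    intro t ht
    have hz := hG b hb t ht
    have hzs : u b - v t ∈ Complex.slitPlane := by
      apply slit_of_nonneg_re hz
      rw [Complex.sub_re]
      linarith [h4 t ht]
    have hin : ContinuousWithinAt (fun y : ℝ => u b - v y) (Icc p q) t :=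
      (continuousOn_const.sub hv) t ht
    exact ContinuousAt.comp_continuousWithinAt (f := fun y : ℝ => u b - v y) (x := t)
      (Complex.continuousAt_arg hzs) hin
  have hargA3 : ContinuousOn A3 (Icc a b) := by
    apply ContinuousOn.sub _ continuousOn_const
    intro s hs
    have hz := hG s hs q hq
    have hzs : I * (u s - v q) ∈ Complex.slitPlane := by
      apply slit_of_nonneg_re (by simp [Complex.I_ne_zero, hz])
      have : (I * (u s - v q)).re = -((u s - v q).im) := by simp [Complex.mul_re]
      rw [this, Complex.sub_im]
      linarith [h2 s hs]
    have hin : ContinuousWithinAt (fun y : ℝ => I * (u y - v q)) (Icc a b) s :=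
      (continuousOn_const.mul (hu.sub continuousOn_const)) s hs
    exact ContinuousAt.comp_continuousWithinAt (f := fun y : ℝ => I * (u y - v q)) (x := s)
      (Complex.continuousAt_arg hzs) hin
  have hargA4 : ContinuousOn A4 (Icc p q) := by
    apply ContinuousOn.sub _ continuousOn_const
    intro t ht
    have hz := hG a ha t ht
    have hzs : -(u a - v t) ∈ Complex.slitPlane := by
      apply slit_of_nonneg_re (neg_ne_zero.mpr hz)
      rw [Complex.neg_re, Complex.sub_re]
      linarith [h3 t ht]
    have hin : ContinuousWithinAt (fun y : ℝ => -(u a - v y)) (Icc p q) t :=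
      ((continuousOn_const.sub hv).neg) t ht
    exact ContinuousAt.comp_continuousWithinAt (f := fun y : ℝ => -(u a - v y)) (x := t)
      (Complex.continuousAt_arg hzs) hin
  -- the four constancy equations
  have e1 : (L a p).im - A1 a = (L b p).im - A1 b := by
    apply key _ a b hab (((Complex.continuous_im.comp_continuousOn hLp)).sub hargA1)
    intro s hs
    exact hval (L s p) (u s - v p) (hG s hs p hp) (hLexp s hs p hp) (A1 s)
      (legA_exp (hG s hs p hp))
  have e2 : (L b p).im - A2 p = (L b q).im - A2 q := by
    apply key _ p q hpq (((Complex.continuous_im.comp_continuousOn hLb)).sub hargA2)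
    intro t ht
    exact hval (L b t) (u b - v t) (hG b hb t ht) (hLexp b hb t ht) (A2 t)
      (legB_exp (hG b hb t ht))
  have e3 : (L a q).im - A3 a = (L b q).im - A3 b := by
    apply key _ a b hab (((Complex.continuous_im.comp_continuousOn hLq)).sub hargA3)
    intro s hs
    exact hval (L s q) (u s - v q) (hG s hs q hq) (hLexp s hs q hq) (A3 s)
      (legC_exp (hG s hs q hq))
  have e4 : (L a p).im - A4 p = (L a q).im - A4 q := by
    apply key _ p q hpq (((Complex.continuous_im.comp_continuousOn hLa)).sub hargA4)
    intro t ht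
    exact hval (L a t) (u a - v t) (hG a ha t ht) (hLexp a ha t ht) (A4 t)
      (legD_exp (hG a ha t ht))
  clear_value A1 A2 A3 A4
  -- corner bounds
  have hpi := Real.pi_pos
  have bndA1 : ∀ s ∈ Icc a b, A1 s ∈ Icc 0 π := by
    intro s hs
    have him : 0 ≤ (u s - v p).im := by rw [Complex.sub_im]; linarith [h1 s hs]
    have : |(-I * (u s - v p)).arg| ≤ π/2 := by
      rw [Complex.abs_arg_le_pi_div_two_iff]
      have : (-I * (u s - v p)).re = (u s - v p).im := by simp [Complex.mul_re]
      rw [this]; exact him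
    cases' abs_le.mp this with hl hr
    exact ⟨by simp only [hA1]; linarith, by simp only [hA1]; linarith⟩
  have bndA2 : ∀ t ∈ Icc p q, A2 t ∈ Icc (-(π/2)) (π/2) := by
    intro t ht
    have hre : 0 ≤ (u b - v t).re := by rw [Complex.sub_re]; linarith [h4 t ht]
    have : |(u b - v t).arg| ≤ π/2 := Complex.abs_arg_le_pi_div_two_iff.mpr hre
    cases' abs_le.mp this with hl hr
    exact ⟨by simp only [hA2]; linarith, by simp only [hA2]; linarith⟩
  have bndA3 : ∀ s ∈ Icc a b, A3 s ∈ Icc (-π) 0 := by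
    intro s hs
    have him : (u s - v q).im ≤ 0 := by rw [Complex.sub_im]; linarith [h2 s hs]
    have : |(I * (u s - v q)).arg| ≤ π/2 := by
      rw [Complex.abs_arg_le_pi_div_two_iff]
      have : (I * (u s - v q)).re = -((u s - v q).im) := by simp [Complex.mul_re]
      rw [this]; linarith
    cases' abs_le.mp this with hl hr
    exact ⟨by simp only [hA3]; linarith, by simp only [hA3]; linarith⟩
  have bndA4 : ∀ t ∈ Icc p q, A4 t ∈ Icc (-(3*π/2)) (-(π/2)) := by
    intro t ht
    have hre : 0 ≤ (-(u a - v t)).re := by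
      rw [Complex.neg_re, Complex.sub_re]; linarith [h3 t ht]
    have : |(-(u a - v t)).arg| ≤ π/2 := Complex.abs_arg_le_pi_div_two_iff.mpr hre
    cases' abs_le.mp this with hl hr
    exact ⟨by simp only [hA4]; linarith, by simp only [hA4]; linarith⟩
  -- corner matches
  have m1 : A1 b = A2 p := by
    have hz := hG b hb p hp
    apply angle_eq_of_exp_eq
    · simp only [hA1, hA2]
      rw [legA_exp hz, legB_exp hz]
    · obtain ⟨l1, r1⟩ := bndA1 b hb
      obtain ⟨l2, r2⟩ := bndA2 p hp
      rw [abs_lt]; constructor <;> linarith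
  have m2 : A2 q = A3 b := by
    have hz := hG b hb q hq
    apply angle_eq_of_exp_eq
    · simp only [hA2, hA3]
      rw [legB_exp hz, legC_exp hz]
    · obtain ⟨l1, r1⟩ := bndA2 q hq
      obtain ⟨l2, r2⟩ := bndA3 b hb
      rw [abs_lt]; constructor <;> linarith
  have m3 : A3 a = A4 q := by
    have hz := hG a ha q hq
    apply angle_eq_of_exp_eq
    · simp only [hA3, hA4]
      rw [legC_exp hz, legD_exp hz]
    · obtain ⟨l1, r1⟩ := bndA3 a ha
      obtain ⟨l2, r2⟩ := bndA4 q hq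
      rw [abs_lt]; constructor <;> linarith
  have m4 : A1 a = A4 p + 2 * π := by
    have hz := hG a ha p hp
    apply angle_shift_of_exp_eq
    · simp only [hA1, hA4]
      rw [legA_exp hz, legD_exp hz]
    · obtain ⟨l1, r1⟩ := bndA1 a ha
      obtain ⟨l2, r2⟩ := bndA4 p hp
      linarith
    · obtain ⟨l1, r1⟩ := bndA1 a ha
      obtain ⟨l2, r2⟩ := bndA4 p hp
      linarith
  linarith [e1, e2, e3, e4, m1, m2, m3, m4, hpi]

/-- Main lemma: no injective continuous map can 1/2-approximate the d-winding, d ≥ 2. -/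
lemma no_embed (d : ℤ) (hd : 2 ≤ d) (f : Metric.sphere (0:ℂ) 1 → ℂ)
    (hfc : Continuous f) (hfi : Function.Injective f)
    (hfd : ∀ z, dist (f z) ((z : ℂ) ^ d) < 1/2) : False := by
  have hpi := Real.pi_pos
  have hd2 : (2:ℝ) ≤ (d:ℝ) := by exact_mod_cast hd
  -- circle parametrization
  have hmemE : ∀ t : ℝ, Complex.exp (((2*π*t : ℝ) : ℂ) * I) ∈ Metric.sphere (0:ℂ) 1 := by
    intro t
    rw [mem_sphere_zero_iff_norm]
    exact Complex.norm_exp_ofReal_mul_I _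
  set E : ℝ → Metric.sphere (0:ℂ) 1 := fun t => ⟨Complex.exp (((2*π*t : ℝ) : ℂ) * I), hmemE t⟩
    with hE
  have hEcont : Continuous E := by
    apply Continuous.subtype_mk
    exact Complex.continuous_exp.comp (by continuity)
  set c : ℝ → ℂ := fun t => f (E t) with hc
  have hccont : Continuous c := hfc.comp hEcont
  set md : ℝ → ℂ := fun t => Complex.exp (((2*π*(d:ℝ)*t : ℝ) : ℂ) * I) with hmd
  have hmdne : ∀ t, md t ≠ 0 := fun t => Complex.exp_ne_zero _
  have hmdnorm : ∀ t, ‖md t‖ = 1 := fun t => Complex.norm_exp_ofReal_mul_I _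
  have hmdcont : Continuous md := Complex.continuous_exp.comp (by continuity)
  have hmodel : ∀ t, ((E t : ℂ)) ^ d = md t := by
    intro t
    have h1 : ((E t : ℂ)) = Complex.exp (((2*π*t : ℝ) : ℂ) * I) := rfl
    rw [h1, ← Complex.exp_int_mul]
    congr 1
    push_cast
    ring
  have hclose : ∀ t, ‖c t - md t‖ < 1/2 := by
    intro t
    rw [← hmodel t, ← dist_eq_norm]
    exact hfd (E t)
  set A : ℝ → ℂ := fun t => c t / md t with hA
  have hAnear : ∀ t, ‖A t - 1‖ < 1/2 := by
    intro t
    have : A t - 1 = (c t - md t) / md t := by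
      rw [hA]
      simp only
      rw [eq_div_iff (hmdne t), sub_mul, div_mul_cancel₀ _ (hmdne t), one_mul]
    rw [this, norm_div, hmdnorm t, div_one]
    exact hclose t
  have hAnear1 : ∀ t, ‖A t - 1‖ < 1 := fun t => lt_trans (hAnear t) (by norm_num)
  have hAne : ∀ t, A t ≠ 0 := fun t => near_one_ne (hAnear1 t)
  have hAre : ∀ t, 0 < (A t).re := fun t => near_one_re (hAnear1 t)
  have hAcont : Continuous A := hccont.div hmdcont hmdne
  set w : ℝ → ℂ := fun t => Complex.log (A t) with hw
  have hwexp : ∀ t, Complex.exp (w t) = A t := fun t => Complex.exp_log (hAne t)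
  have hwcont : Continuous w := by
    rw [continuous_iff_continuousAt]
    intro t
    exact (hAcont.continuousAt).clog (near_one_slit (hAnear1 t))
  have hcw : ∀ t, c t = Complex.exp (w t + ((2*π*(d:ℝ)*t : ℝ) : ℂ) * I) := by
    intro t
    rw [Complex.exp_add, hwexp t]
    have : A t * md t = c t := by
      rw [hA]
      exact div_mul_cancel₀ _ (hmdne t)
    exact this.symm
  -- bounds on w
  have hwim : ∀ t, |(w t).im| ≤ π/2 := by
    intro t
    rw [hw]
    simp only [Complex.log_im]
    exact Complex.abs_arg_le_pi_div_two_iff.mpr (hAre t).le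
  have hwre : ∀ t, |(w t).re| ≤ 1 := by
    intro t
    rw [hw]
    simp only [Complex.log_re]
    have habs : |‖A t‖ - 1| < 1/2 := by
      have h1 : |‖A t‖ - ‖(1:ℂ)‖| ≤ ‖A t - 1‖ := abs_norm_sub_norm_le _ _
      simp only [norm_one] at h1
      exact lt_of_le_of_lt h1 (hAnear t)
    obtain ⟨hl, hr⟩ := abs_lt.mp habs
    have hpos : (0:ℝ) < ‖A t‖ := by linarith
    rw [abs_le]
    constructor
    · have h2 : Real.log (‖A t‖)⁻¹ ≤ (‖A t‖)⁻¹ - 1 :=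
        Real.log_le_sub_one_of_pos (by positivity)
      rw [Real.log_inv] at h2
      have h3 : (‖A t‖)⁻¹ ≤ 2 := by
        rw [inv_le_comm₀ (by linarith) (by norm_num)]
        linarith
      linarith
    · have h2 : Real.log (‖A t‖) ≤ ‖A t‖ - 1 :=
        Real.log_le_sub_one_of_pos hpos
      linarith
  -- periodicity
  have hEperZ : ∀ (n : ℤ) (t : ℝ), E (t + n) = E t := by
    intro n t
    apply Subtype.ext
    show Complex.exp _ = Complex.exp _
    have h1 : ((2*π*(t + n) : ℝ) : ℂ) * I = ((2*π*t : ℝ) : ℂ) * I + (n:ℂ) * (2*(π:ℂ)*I) := by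
      push_cast
      ring
    rw [h1, Complex.exp_add, Complex.exp_int_mul_two_pi_mul_I, mul_one]
  have hcperZ : ∀ (n : ℤ) (t : ℝ), c (t + n) = c t := by
    intro n t
    rw [hc]
    simp only
    rw [hEperZ n t]
  have hmdperZ : ∀ (n : ℤ) (t : ℝ), md (t + n) = md t := by
    intro n t
    rw [hmd]
    simp only
    have h1 : ((2*π*(d:ℝ)*(t + n) : ℝ) : ℂ) * I
        = ((2*π*(d:ℝ)*t : ℝ) : ℂ) * I + ((d*n : ℤ):ℂ) * (2*(π:ℂ)*I) := by
      push_cast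
      ring
    rw [h1, Complex.exp_add, Complex.exp_int_mul_two_pi_mul_I, mul_one]
  have hwperZ : ∀ (n : ℤ) (t : ℝ), w (t + n) = w t := by
    intro n t
    rw [hw]
    simp only
    rw [hA]
    simp only
    rw [hcperZ n t, hmdperZ n t]
  -- injectivity
  have hEinj : ∀ s t : ℝ, E s = E t → ∃ n : ℤ, s = t + n := by
    intro s t hst
    have h1 : Complex.exp (((2*π*s : ℝ) : ℂ) * I) = Complex.exp (((2*π*t : ℝ) : ℂ) * I) :=
      congrArg Subtype.val hst
    obtain ⟨n, hn⟩ := exp_I_diff h1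
    refine ⟨n, ?_⟩
    have h2π : (2*π) ≠ 0 := by positivity
    have hz : 2*π*(s - (t + n)) = 0 := by linear_combination hn
    rcases mul_eq_zero.mp hz with h | h
    · exact absurd h h2π
    · linarith
  have hcinj : ∀ s t : ℝ, c s = c t → ∃ n : ℤ, s = t + n := by
    intro s t h
    exact hEinj s t (hfi h)
  -- the lifted curve
  set Z : ℝ → ℂ := fun t => ((2*π*(d:ℝ)*t + (w t).im : ℝ) : ℂ) + ((w t).re : ℝ) * I with hZ
  have hZre : ∀ t, (Z t).re = 2*π*(d:ℝ)*t + (w t).im := by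
    intro t
    rw [hZ]
    simp [Complex.add_re, Complex.ofReal_re, Complex.mul_re]
  have hZim : ∀ t, (Z t).im = (w t).re := by
    intro t
    rw [hZ]
    simp [Complex.add_im, Complex.ofReal_im, Complex.mul_im]
  have hZcont : Continuous Z := by
    apply Continuous.add
    · apply Complex.continuous_ofReal.comp
      exact (continuous_const.mul continuous_id).add (Complex.continuous_im.comp hwcont)
    · exact (Complex.continuous_ofReal.comp (Complex.continuous_re.comp hwcont)).mul
        continuous_const
  -- disjointness from the 2π-translate
  have hdisj : ∀ s t : ℝ, Z s ≠ Z t + ((2*π : ℝ) : ℂ) := by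
    intro s t heq
    have h1 : (w s).re = (w t).re := by
      have := congrArg Complex.im heq
      simpa [hZim, Complex.add_im, Complex.ofReal_im] using this
    have h2 : 2*π*(d:ℝ)*s + (w s).im = 2*π*(d:ℝ)*t + (w t).im + 2*π := by
      have := congrArg Complex.re heq
      simpa [hZre, Complex.add_re, Complex.ofReal_re] using this
    have hcs : c s = c t := by
      rw [hcw s, hcw t]
      have hexps : w s + ((2*π*(d:ℝ)*s : ℝ) : ℂ) * I
          = (w t + ((2*π*(d:ℝ)*t : ℝ) : ℂ) * I) + ((2*π : ℝ) : ℂ) * I := by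
        apply Complex.ext
        · simp [Complex.add_re, Complex.mul_re, Complex.ofReal_re, Complex.ofReal_im, h1]
        · simp [Complex.add_im, Complex.mul_im, Complex.ofReal_re, Complex.ofReal_im]
          linarith
      rw [hexps, Complex.exp_add]
      have h2π1 : Complex.exp (((2*π : ℝ) : ℂ) * I) = 1 := by
        push_cast
        exact Complex.exp_two_pi_mul_I
      rw [h2π1, mul_one]
    obtain ⟨n, hn⟩ := hcinj s t hcs
    have hwst : w (t + (n:ℝ)) = w t := hwperZ n t
    rw [hn, hwst] at h2
    have hdn : (d:ℝ) * n = 1 := by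
      have h2π : (2*π) ≠ 0 := by positivity
      have hz : 2*π*((d:ℝ)*n - 1) = 0 := by linear_combination h2
      rcases mul_eq_zero.mp hz with h | h
      · exact absurd h h2π
      · linarith
    have hdn' : (d * n : ℤ) = 1 := by exact_mod_cast hdn
    have := Int.isUnit_iff.mp (IsUnit.of_mul_eq_one (b := n) hdn')
    omega
  -- extrema of ρ = re ∘ w
  set ρ : ℝ → ℝ := fun t => (w t).re with hρ
  have hρcont : Continuous ρ := Complex.continuous_re.comp hwcont
  have hfract : ∀ x : ℝ, ρ x = ρ (Int.fract x) := by
    intro x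
    have h1 : x = Int.fract x + ((⌊x⌋ : ℤ) : ℝ) := by
      rw [Int.fract]
      ring
    rw [hρ]
    simp only
    conv_lhs => rw [h1]
    rw [hwperZ ⌊x⌋ (Int.fract x)]
  have hfractmem : ∀ x : ℝ, Int.fract x ∈ Icc (0:ℝ) 1 :=
    fun x => ⟨Int.fract_nonneg x, (Int.fract_lt_one x).le⟩
  have hIcc : (Icc (0:ℝ) 1).Nonempty := Set.nonempty_Icc.mpr (by norm_num)
  obtain ⟨S, hS01, hSmin'⟩ := isCompact_Icc.exists_isMinOn hIcc hρcont.continuousOn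
  obtain ⟨T', hT01, hTmax'⟩ := isCompact_Icc.exists_isMaxOn hIcc hρcont.continuousOn
  have hSmin : ∀ x : ℝ, ρ S ≤ ρ x := by
    intro x
    rw [hfract x]
    exact hSmin' (hfractmem x)
  have hTmax' : ∀ x : ℝ, ρ x ≤ ρ T' := by
    intro x
    rw [hfract x]
    exact hTmax' (hfractmem x)
  obtain ⟨T, hST, hTmax⟩ : ∃ T : ℝ, S ≤ T ∧ ∀ x : ℝ, ρ x ≤ ρ T := by
    rcases le_total S T' with h | h
    · exact ⟨T', h, hTmax'⟩
    · refine ⟨T' + 1, by linarith [hS01.2, hT01.1], ?_⟩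
      intro x
      have : ρ (T' + 1) = ρ T' := by
        have : ((1:ℤ) : ℝ) = (1:ℝ) := by norm_num
        rw [← this, hρ]
        simp only
        rw [hwperZ 1 T']
      rw [this]
      exact hTmax' x
  -- apply the crossing lemma
  have hcross := crossing (a := S - 1) (b := T + 1) (p := S) (q := T)
    (u := Z) (v := fun t => Z t + ((2*π : ℝ) : ℂ))
    (by linarith) hST hZcont.continuousOn
    ((hZcont.continuousOn).add continuousOn_const)
    ?_ ?_ ?_ ?_
  · obtain ⟨s, _, t, _, heq⟩ := hcross
    exact hdisj s t heq
  · -- h1 : v S is lowest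
    intro s _
    have : (Z S + ((2*π : ℝ) : ℂ)).im = ρ S := by
      simp [Complex.add_im, Complex.ofReal_im, hZim, hρ]
    rw [this, hZim]
    exact hSmin s
  · -- h2 : v T is highest
    intro s _
    have : (Z T + ((2*π : ℝ) : ℂ)).im = ρ T := by
      simp [Complex.add_im, Complex.ofReal_im, hZim, hρ]
    rw [this, hZim]
    exact hTmax s
  · -- h3 : u (S-1) is leftmost
    intro t ht
    have he1 := abs_le.mp (hwim (S - 1))
    have he2 := abs_le.mp (hwim t)
    rw [hZre, Complex.add_re, hZre, Complex.ofReal_re]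
    have hmono : 2*π*(d:ℝ)*S ≤ 2*π*(d:ℝ)*t := by
      apply mul_le_mul_of_nonneg_left ht.1
      positivity
    have h2πd : 4*π ≤ 2*π*(d:ℝ) := by nlinarith
    nlinarith [he1.2, he2.1]
  · -- h4 : u (T+1) is rightmost
    intro t ht
    have he1 := abs_le.mp (hwim (T + 1))
    have he2 := abs_le.mp (hwim t)
    rw [hZre, Complex.add_re, hZre, Complex.ofReal_re]
    have hmono : 2*π*(d:ℝ)*t ≤ 2*π*(d:ℝ)*T := by
      apply mul_le_mul_of_nonneg_left ht.2
      positivity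
    have h2πd : 4*π ≤ 2*π*(d:ℝ) := by nlinarith
    nlinarith [he1.1, he2.2]

end Stmt3

/-- The standard d-winding z ↦ z^d of the unit circle, regarded as a map into
the plane ℂ ≅ ℝ², is approximable by embeddings iff d ∈ {-1, 0, 1}. -/
theorem stmt_3 (d : ℤ) :
    (∀ ε > (0 : ℝ), ∃ f : Metric.sphere (0 : ℂ) 1 → ℂ,
        Continuous f ∧ Function.Injective f ∧ ∀ z, dist (f z) ((z : ℂ) ^ d) < ε) ↔
    d = -1 ∨ d = 0 ∨ d = 1 := by
  have hzne : ∀ z : Metric.sphere (0:ℂ) 1, (z : ℂ) ≠ 0 := by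
    intro z
    have := mem_sphere_zero_iff_norm.mp z.2
    intro h
    rw [h] at this
    norm_num at this
  constructor
  · intro h
    by_contra hcon
    push_neg at hcon
    obtain ⟨h1, h2, h3⟩ := hcon
    obtain ⟨f, hfc, hfi, hfd⟩ := h (1/2) (by norm_num)
    rcases (by omega : 2 ≤ d ∨ d ≤ -2) with hd | hd
    · exact Stmt3.no_embed d hd f hfc hfi hfd
    · -- compose with inversion
      have hinvmem : ∀ z : Metric.sphere (0:ℂ) 1, (z : ℂ)⁻¹ ∈ Metric.sphere (0:ℂ) 1 := by
        intro z
        rw [mem_sphere_zero_iff_norm, norm_inv, mem_sphere_zero_iff_norm.mp z.2]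
        norm_num
      set inv : Metric.sphere (0:ℂ) 1 → Metric.sphere (0:ℂ) 1 :=
        fun z => ⟨(z : ℂ)⁻¹, hinvmem z⟩ with hinv
      have hinvc : Continuous inv :=
        Continuous.subtype_mk (continuous_subtype_val.inv₀ hzne) _
      have hinvi : Function.Injective inv := by
        intro z w hzw
        have : ((z:ℂ))⁻¹ = ((w:ℂ))⁻¹ := congrArg Subtype.val hzw
        exact Subtype.ext (inv_injective this)
      refine Stmt3.no_embed (-d) (by omega) (fun z => f (inv z))
        (hfc.comp hinvc) (hfi.comp hinvi) ?_
      intro z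
      have hzz : ((inv z : ℂ)) ^ d = (z : ℂ) ^ (-d) := by
        show ((z : ℂ)⁻¹) ^ d = (z : ℂ) ^ (-d)
        rw [inv_zpow, zpow_neg]
      have := hfd (inv z)
      rwa [hzz] at this
  · intro h ε hε
    rcases h with h | h | h
    · subst h
      refine ⟨fun z => (z : ℂ)⁻¹, continuous_subtype_val.inv₀ hzne,
        fun z w hzw => Subtype.ext (inv_injective hzw), ?_⟩
      intro z
      rw [zpow_neg, zpow_one, dist_self]
      exact hε
    · subst h
      refine ⟨fun z => 1 + (ε/2 : ℝ) * (z : ℂ), ?_, ?_, ?_⟩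
      · exact continuous_const.add (continuous_const.mul continuous_subtype_val)
      · intro z w hzw
        have hε2 : ((ε/2 : ℝ) : ℂ) ≠ 0 := by
          simp only [ne_eq, Complex.ofReal_eq_zero]
          positivity
        have : ((ε/2 : ℝ) : ℂ) * z = ((ε/2 : ℝ) : ℂ) * w := by
          have := add_left_cancel hzw
          exact this
        exact Subtype.ext (mul_left_cancel₀ hε2 this)
      · intro z
        rw [zpow_zero, dist_eq_norm]
        have : (1 : ℂ) + (ε/2 : ℝ) * (z : ℂ) - 1 = ((ε/2 : ℝ) : ℂ) * z := by ring
        rw [this, norm_mul, mem_sphere_zero_iff_norm.mp z.2, mul_one,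
          Complex.norm_real, Real.norm_eq_abs, abs_of_pos (by positivity)]
        linarith
    · subst h
      refine ⟨fun z => (z : ℂ), continuous_subtype_val, fun z w hzw => Subtype.ext hzw, ?_⟩
      intro z
      rw [zpow_one, dist_self]
      exact hε
end
end

section
/- A transversal intersection of two segments is not disjoinable. Precisely: let φ, ψ : [0,1] → ℝ² be the affine parametrizations φ(t) = p₁ + t·(q₁-p₁) and ψ(t) = p₂ + t·(q₂-p₂) of segments [p₁,q₁] and [p₂,q₂] in ℝ², where q₁-p₁ and q₂-p₂ are linearly independent and the two segments intersect in exactly one point lying in the relative interior of each. Then there exists ε > 0 such that for all continuous maps f, g : [0,1] → ℝ² with dist(f x, φ x) < ε and dist(g x, ψ x) < ε for all x, the ranges of f and g intersect. -/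
open Real Set

private lemma loc_sin (y : ℝ) (h0 : 0 ≤ y) (h2 : y < 2*π) (hs : 0 < Real.sin y) :
    0 < y ∧ y < π := by
  constructor
  · rcases h0.lt_or_eq with h | h
    · exact h
    · simp [← h] at hs
  · by_contra hy
    push_neg at hy
    have h1 : Real.sin (y - π) = -Real.sin y := Real.sin_sub_pi y
    have h3 : 0 ≤ Real.sin (y - π) :=
      Real.sin_nonneg_of_nonneg_of_le_pi (by linarith) (by linarith)
    linarith

private lemma loc1 (y : ℝ) (h0 : 0 ≤ y) (h2 : y < 2*π) (hs : 0 < Real.sin y)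
    (hc : 0 < Real.cos y) : 0 < y ∧ y < π/2 := by
  obtain ⟨hy0, hyp⟩ := loc_sin y h0 h2 hs
  refine ⟨hy0, ?_⟩
  by_contra hy
  push_neg at hy
  have := Real.cos_nonpos_of_pi_div_two_le_of_le hy (by linarith [Real.pi_pos])
  linarith

private lemma loc2 (y : ℝ) (h0 : 0 ≤ y) (h2 : y < 2*π) (hs : 0 < Real.sin y)
    (hc : Real.cos y < 0) : π/2 < y ∧ y < π := by
  obtain ⟨hy0, hyp⟩ := loc_sin y h0 h2 hs
  refine ⟨?_, hyp⟩
  by_contra hy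
  push_neg at hy
  have := Real.cos_nonneg_of_mem_Icc ⟨by linarith [Real.pi_pos], hy⟩
  linarith

private lemma band_decomp (A : ℝ) :
    ∃ (j : ℤ) (y : ℝ), A = 2*j*π + y ∧ 0 ≤ y ∧ y < 2*π ∧
      Real.sin y = Real.sin A ∧ Real.cos y = Real.cos A := by
  have h2p : 0 < 2*π := Real.two_pi_pos
  refine ⟨⌊A / (2*π)⌋, A - 2*(⌊A / (2*π)⌋:ℝ)*π, by ring, ?_, ?_, ?_, ?_⟩
  · have h := Int.floor_le (A / (2*π))
    have h' := (le_div_iff₀ h2p).mp h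
    linarith
  · have h := Int.lt_floor_add_one (A / (2*π))
    have h' := (div_lt_iff₀ h2p).mp h
    push_cast at h' ⊢
    linarith
  · rw [show A - 2*(⌊A / (2*π)⌋:ℝ)*π = A + (-⌊A / (2*π)⌋ : ℤ) * (2*π) by push_cast; ring]
    exact Real.sin_add_int_mul_two_pi A _
  · rw [show A - 2*(⌊A / (2*π)⌋:ℝ)*π = A + (-⌊A / (2*π)⌋ : ℤ) * (2*π) by push_cast; ring]
    exact Real.cos_add_int_mul_two_pi A _

private lemma exists_band {A : ℝ} (hs : 0 < Real.sin A) (hc : Real.cos A < 0) :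
    ∃ k : ℤ, 2*k*π + π/2 < A ∧ A < 2*k*π + π := by
  obtain ⟨j, y, hA, h0, h2, hsy, hcy⟩ := band_decomp A
  obtain ⟨hy1, hy2⟩ := loc2 y h0 h2 (hsy ▸ hs) (hcy ▸ hc)
  exact ⟨j, by linarith, by linarith⟩

private lemma corner_step (k : ℤ) (off A B : ℝ)
    (hA1 : 2*k*π + off + π/2 < A) (hA2 : A < 2*k*π + off + π)
    (hI : ∀ w ∈ Set.uIcc A B, 0 < Real.sin (w - off))
    (hB1 : 0 < Real.sin (B - off)) (hB2 : 0 < Real.cos (B - off)) :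
    2*k*π + off < B ∧ B < 2*k*π + off + π/2 := by
  have hpi : 0 < π := Real.pi_pos
  obtain ⟨j, y, hBo, h0, h2, hsy, hcy⟩ := band_decomp (B - off)
  obtain ⟨hy1, hy2⟩ := loc1 y h0 h2 (hsy ▸ hB1) (hcy ▸ hB2)
  rcases lt_trichotomy j k with hjk | hjk | hjk
  · exfalso
    have hj : (j:ℝ) ≤ (k:ℝ) - 1 := by
      have : j ≤ k - 1 := by omega
      exact_mod_cast this
    have hBlt : B < 2*k*π + off := by nlinarith
    have hw := hI (2*k*π + off) (by
      rw [Set.mem_uIcc]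
      right
      constructor <;> linarith)
    have : Real.sin ((2*(k:ℝ)*π + off) - off) = 0 := by
      rw [show (2*(k:ℝ)*π + off) - off = 0 + (k:ℤ) * (2*π) by push_cast; ring,
        Real.sin_add_int_mul_two_pi, Real.sin_zero]
    linarith
  · subst hjk
    constructor <;> nlinarith
  · exfalso
    have hj : (k:ℝ) + 1 ≤ (j:ℝ) := by exact_mod_cast hjk
    have hBgt : 2*k*π + off + π + π/2 < B := by nlinarith
    have hw := hI (2*k*π + off + (π/2 + π)) (by
      rw [Set.mem_uIcc]
      left
      constructor <;> linarith)
    have : Real.sin ((2*(k:ℝ)*π + off + (π/2 + π)) - off) = -1 := by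
      rw [show (2*(k:ℝ)*π + off + (π/2 + π)) - off = (π/2 + π) + (k:ℤ) * (2*π) by push_cast; ring,
        Real.sin_add_int_mul_two_pi, Real.sin_add_pi, Real.sin_pi_div_two]
    linarith

private abbrev TT := (Set.Icc (0:ℝ) 1) × (Set.Icc (0:ℝ) 1)

private def scl (c : Set.Icc (0:ℝ) 1) (z : TT) : TT :=
  (⟨(c:ℝ) * z.1, ⟨mul_nonneg c.2.1 z.1.2.1, mul_le_one₀ c.2.2 z.1.2.1 z.1.2.2⟩⟩,
   ⟨(c:ℝ) * z.2, ⟨mul_nonneg c.2.1 z.2.2.1, mul_le_one₀ c.2.2 z.2.2.1 z.2.2.2⟩⟩)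

private lemma continuous_scl (c : Set.Icc (0:ℝ) 1) : Continuous (scl c) := by
  apply Continuous.prodMk <;>
  · apply Continuous.subtype_mk
    fun_prop

private lemma dist_scl (c d : Set.Icc (0:ℝ) 1) (z : TT) :
    dist (scl c z) (scl d z) ≤ |(c:ℝ) - (d:ℝ)| := by
  rw [Prod.dist_eq]
  apply max_le
  · rw [Subtype.dist_eq]
    simp only [scl]
    rw [Real.dist_eq, ← sub_mul, abs_mul]
    calc |(c:ℝ) - d| * |(z.1:ℝ)| ≤ |(c:ℝ) - d| * 1 := by
          apply mul_le_mul_of_nonneg_left _ (abs_nonneg _)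
          rw [_root_.abs_of_nonneg z.1.2.1]
          exact z.1.2.2
      _ = _ := mul_one _
  · rw [Subtype.dist_eq]
    simp only [scl]
    rw [Real.dist_eq, ← sub_mul, abs_mul]
    calc |(c:ℝ) - d| * |(z.2:ℝ)| ≤ |(c:ℝ) - d| * 1 := by
          apply mul_le_mul_of_nonneg_left _ (abs_nonneg _)
          rw [_root_.abs_of_nonneg z.2.2.1]
          exact z.2.2.2
      _ = _ := mul_one _

private lemma contLog {h : TT → ℂ} (hcon : Continuous h)
    {m : ℝ} (hm : 0 < m) (hb : ∀ z, m ≤ ‖h z‖) :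
    ∃ Θ : TT → ℂ, Continuous Θ ∧ ∀ z, Complex.exp (Θ z) = h z := by
  have hne : ∀ z, h z ≠ 0 := fun z hz => by
    have := hb z; rw [hz] at this; simp at this; linarith
  -- uniform continuity
  have huc : UniformContinuous h := CompactSpace.uniformContinuous_of_continuous hcon
  obtain ⟨δ, hδ, hδ'⟩ := Metric.uniformContinuous_iff.mp huc m hm
  obtain ⟨n, hn⟩ := exists_nat_gt (max 1 (1/δ))
  have hn1 : 1 ≤ (n:ℝ) := le_of_lt (lt_of_le_of_lt (le_max_left _ _) hn)
  have hnpos : (0:ℝ) < n := by linarith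
  have hstep : 1/(n:ℝ) < δ := by
    rw [div_lt_iff₀ hnpos]
    have : 1/δ < n := lt_of_le_of_lt (le_max_right _ _) hn
    rw [div_lt_iff₀ hδ] at this
    linarith
  -- the scaling constants
  set cc : ℕ → Set.Icc (0:ℝ) 1 := fun j =>
    ⟨min ((j:ℝ)/n) 1, ⟨le_min (by positivity) zero_le_one, min_le_right _ _⟩⟩ with hcc
  set F : ℕ → TT → ℂ := fun j z => h (scl (cc j) z) with hF
  have hFne : ∀ j z, F j z ≠ 0 := fun j z => hne _
  have hF0 : ∀ z, F 0 z = h ((⟨0, by norm_num⟩ : Set.Icc (0:ℝ) 1),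
      (⟨0, by norm_num⟩ : Set.Icc (0:ℝ) 1)) := by
    intro z
    have h0 : ((cc 0 : Set.Icc (0:ℝ) 1) : ℝ) = 0 := by simp [hcc]
    have hs : scl (cc 0) z = ((⟨0, by norm_num⟩ : Set.Icc (0:ℝ) 1),
        (⟨0, by norm_num⟩ : Set.Icc (0:ℝ) 1)) := by
      apply Prod.ext <;> (apply Subtype.ext; simp [scl, h0])
    simp only [hF, hs]
  have hFn : ∀ z, F n z = h z := by
    intro z
    have h1 : ((cc n : Set.Icc (0:ℝ) 1) : ℝ) = 1 := by
      simp [hcc, div_self (ne_of_gt hnpos)]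
    have hs : scl (cc n) z = z := by
      apply Prod.ext <;> (apply Subtype.ext; simp [scl, h1, div_self (ne_of_gt hnpos)])
    simp only [hF, hs]
  -- ratio near 1
  have hratio : ∀ j, j < n → ∀ z : TT, ‖F (j+1) z / F j z - 1‖ < 1 := by
    intro j hj z
    have hccj : ((cc j : Set.Icc (0:ℝ) 1) : ℝ) = (j:ℝ)/n := by
      simp only [hcc]
      exact min_eq_left (by
        rw [div_le_one hnpos]
        exact_mod_cast le_of_lt hj)
    have hccj1 : ((cc (j+1) : Set.Icc (0:ℝ) 1) : ℝ) = ((j:ℝ)+1)/n := by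
      simp only [hcc]
      push_cast
      exact min_eq_left (by
        rw [div_le_one hnpos]
        exact_mod_cast Nat.succ_le_of_lt hj)
    have hdist : dist (scl (cc (j+1)) z) (scl (cc j) z) < δ := by
      calc dist (scl (cc (j+1)) z) (scl (cc j) z) ≤ |((cc (j+1) : Set.Icc (0:ℝ) 1) : ℝ) - (cc j : Set.Icc (0:ℝ) 1)| :=
            dist_scl _ _ _
        _ = 1/n := by
            rw [hccj, hccj1]
            rw [show ((j:ℝ)+1)/n - (j:ℝ)/n = 1/n by ring]
            exact abs_of_pos (by positivity)
        _ < δ := hstep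
    have hnum : ‖F (j+1) z - F j z‖ < m := by
      have := hδ' hdist
      rwa [dist_eq_norm] at this
    have : ‖F (j+1) z / F j z - 1‖ = ‖F (j+1) z - F j z‖ / ‖F j z‖ := by
      rw [div_sub_one (hFne j z), norm_div]
    rw [this]
    rw [div_lt_one (lt_of_lt_of_le hm (hb _))]
    exact lt_of_lt_of_le hnum (hb _)
  have hslit : ∀ j, j < n → ∀ z : TT, F (j+1) z / F j z ∈ Complex.slitPlane := by
    intro j hj z
    have := Complex.mem_slitPlane_of_norm_lt_one (hratio j hj z)
    rwa [add_sub_cancel] at this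
  -- define Θ
  refine ⟨fun z => Complex.log (F 0 z) +
    ∑ j ∈ Finset.range n, Complex.log (F (j+1) z / F j z), ?_, ?_⟩
  · apply Continuous.add
    · have : (fun z => Complex.log (F 0 z)) = fun _ => Complex.log (F 0
        ((⟨0, by norm_num⟩ : Set.Icc (0:ℝ) 1), (⟨0, by norm_num⟩ : Set.Icc (0:ℝ) 1))) := by
        funext z
        rw [hF0 z, hF0]
      rw [this]
      exact continuous_const
    · apply continuous_finset_sum
      intro j hj
      have hj' := Finset.mem_range.mp hj
      have hFcont : ∀ i, Continuous (F i) := fun i => hcon.comp (continuous_scl _)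
      have hq : Continuous fun z => F (j+1) z / F j z :=
        (hFcont (j+1)).div (hFcont j) (fun z => hFne j z)
      rw [continuous_iff_continuousAt]
      intro z
      exact hq.continuousAt.clog (hslit j hj' z)
  · intro z
    have key : ∀ k, k ≤ n → Complex.exp (Complex.log (F 0 z) +
        ∑ j ∈ Finset.range k, Complex.log (F (j+1) z / F j z)) = F k z := by
      intro k
      induction k with
      | zero => intro _; simp [Complex.exp_log (hFne 0 z)]
      | succ k ih =>
        intro hk
        rw [Finset.sum_range_succ, ← add_assoc, Complex.exp_add, ih (by omega),
          Complex.exp_log (div_ne_zero (hFne (k+1) z) (hFne k z))]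
        rw [mul_comm]
        exact div_mul_cancel₀ _ (hFne k z)
    rw [key n le_rfl, hFn]

private lemma sin_pos_of_im_pos {w v : ℂ} (h : Complex.exp w = v) (hv : 0 < v.im) :
    0 < Real.sin w.im := by
  have h1 := Complex.exp_im w
  rw [h] at h1
  by_contra hS
  push_neg at hS
  nlinarith [Real.exp_pos w.re]

private lemma sin_neg_of_im_neg {w v : ℂ} (h : Complex.exp w = v) (hv : v.im < 0) :
    Real.sin w.im < 0 := by
  have h1 := Complex.exp_im w
  rw [h] at h1
  by_contra hS
  push_neg at hS
  nlinarith [Real.exp_pos w.re]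

private lemma cos_pos_of_re_pos {w v : ℂ} (h : Complex.exp w = v) (hv : 0 < v.re) :
    0 < Real.cos w.im := by
  have h1 := Complex.exp_re w
  rw [h] at h1
  by_contra hS
  push_neg at hS
  nlinarith [Real.exp_pos w.re]

private lemma cos_neg_of_re_neg {w v : ℂ} (h : Complex.exp w = v) (hv : v.re < 0) :
    Real.cos w.im < 0 := by
  have h1 := Complex.exp_re w
  rw [h] at h1
  by_contra hS
  push_neg at hS
  nlinarith [Real.exp_pos w.re]
set_option maxHeartbeats 2000000 in
/-- A transversal intersection of two segments in the plane is not
disjoinable. -/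
theorem stmt_7 (p₁ q₁ p₂ q₂ : EuclideanSpace ℝ (Fin 2))
    (hli : LinearIndependent ℝ ![q₁ - p₁, q₂ - p₂])
    (x : EuclideanSpace ℝ (Fin 2))
    (hint : segment ℝ p₁ q₁ ∩ segment ℝ p₂ q₂ = {x})
    (hx₁ : x ∈ openSegment ℝ p₁ q₁) (hx₂ : x ∈ openSegment ℝ p₂ q₂) :
    ∃ ε > (0 : ℝ), ∀ f g : Set.Icc (0 : ℝ) 1 → EuclideanSpace ℝ (Fin 2),
      Continuous f → Continuous g →
      (∀ t : Set.Icc (0 : ℝ) 1, dist (f t) (p₁ + (t : ℝ) • (q₁ - p₁)) < ε) →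
      (∀ t : Set.Icc (0 : ℝ) 1, dist (g t) (p₂ + (t : ℝ) • (q₂ - p₂)) < ε) →
      (Set.range f ∩ Set.range g).Nonempty := by
  classical
  -- extract interior parameters
  obtain ⟨u₁, s₀, hu₁, hs₀, hus₁, hxx₁⟩ := hx₁
  obtain ⟨u₂, t₀, hu₂, ht₀, hus₂, hxx₂⟩ := hx₂
  have hs₀1 : s₀ < 1 := by linarith
  have ht₀1 : t₀ < 1 := by linarith
  have hx1' : x = p₁ + s₀ • (q₁ - p₁) := by
    rw [← hxx₁, show u₁ = 1 - s₀ by linarith]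
    module
  have hx2' : x = p₂ + t₀ • (q₂ - p₂) := by
    rw [← hxx₂, show u₂ = 1 - t₀ by linarith]
    module
  -- the coordinate map L
  have hcard : Fintype.card (Fin 2) = Module.finrank ℝ (EuclideanSpace ℝ (Fin 2)) := by
    simp
  set b := basisOfLinearIndependentOfCardEqFinrank hli hcard with hbdef
  set Le := b.equiv Complex.basisOneI (Equiv.refl _) with hLedef
  set L : EuclideanSpace ℝ (Fin 2) →L[ℝ] ℂ :=
    LinearMap.toContinuousLinearMap Le.toLinearMap with hLdef
  have hLapp : ∀ v, L v = Le v := fun _ => rfl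
  have hLinj : Function.Injective L := by
    intro v w hvw
    rw [hLapp, hLapp] at hvw
    exact Le.injective hvw
  have hb0 : b 0 = q₁ - p₁ := by
    rw [hbdef, coe_basisOfLinearIndependentOfCardEqFinrank]
    simp
  have hb1 : b 1 = q₂ - p₂ := by
    rw [hbdef, coe_basisOfLinearIndependentOfCardEqFinrank]
    simp
  have hLe1 : L (q₁ - p₁) = 1 := by
    rw [hLapp, ← hb0, hLedef, Module.Basis.equiv_apply, Equiv.refl_apply]
    rw [show (Complex.basisOneI 0) = ![1, Complex.I] 0 by rw [Complex.coe_basisOneI]]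
    simp
  have hLe2 : L (q₂ - p₂) = Complex.I := by
    rw [hLapp, ← hb1, hLedef, Module.Basis.equiv_apply, Equiv.refl_apply]
    rw [show (Complex.basisOneI 1) = ![1, Complex.I] 1 by rw [Complex.coe_basisOneI]]
    simp
  -- key identity
  have hpp : p₁ + s₀ • (q₁ - p₁) = p₂ + t₀ • (q₂ - p₂) := by rw [← hx1', ← hx2']
  have hpp0 : (p₁ + s₀ • (q₁ - p₁)) - (p₂ + t₀ • (q₂ - p₂)) = 0 := sub_eq_zero.mpr hpp
  have hvec : ∀ a c : ℝ, (p₁ + a • (q₁ - p₁)) - (p₂ + c • (q₂ - p₂))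
      = (a - s₀) • (q₁ - p₁) + (t₀ - c) • (q₂ - p₂) := by
    intro a c
    rw [← sub_eq_zero]
    rw [show (p₁ + a • (q₁ - p₁)) - (p₂ + c • (q₂ - p₂))
        - ((a - s₀) • (q₁ - p₁) + (t₀ - c) • (q₂ - p₂))
        = (p₁ + s₀ • (q₁ - p₁)) - (p₂ + t₀ • (q₂ - p₂)) by module]
    exact hpp0
  have hLval : ∀ a c : ℝ,
      L ((p₁ + a • (q₁ - p₁)) - (p₂ + c • (q₂ - p₂)))
        = Complex.mk (a - s₀) (t₀ - c) := by
    intro a c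
    rw [hvec, map_add, map_smul, map_smul, hLe1, hLe2]
    apply Complex.ext <;> simp [Complex.real_smul]
  -- margin and epsilon
  set m := min (min s₀ (1-s₀)) (min t₀ (1-t₀)) with hmdef
  have hm : 0 < m :=
    lt_min (lt_min hs₀ (by linarith)) (lt_min ht₀ (by linarith))
  have hms : m ≤ s₀ := le_trans (min_le_left _ _) (min_le_left _ _)
  have hms' : m ≤ 1 - s₀ := le_trans (min_le_left _ _) (min_le_right _ _)
  have hmt : m ≤ t₀ := le_trans (min_le_right _ _) (min_le_left _ _)
  have hmt' : m ≤ 1 - t₀ := le_trans (min_le_right _ _) (min_le_right _ _)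
  set C := ‖L‖ with hCdef
  have hC0 : (0:ℝ) ≤ C := norm_nonneg _
  refine ⟨m / (2*C+1), by positivity, ?_⟩
  intro f g hfc hgc hf hg
  by_contra hconr
  rw [Set.not_nonempty_iff_eq_empty] at hconr
  have hfg : ∀ a c : Set.Icc (0:ℝ) 1, f a ≠ g c := by
    intro a c hac
    have hmem : f a ∈ Set.range f ∩ Set.range g := ⟨⟨a, rfl⟩, ⟨c, hac.symm⟩⟩
    rw [hconr] at hmem
    exact hmem
  set H : TT → ℂ := fun z => L (f z.1 - g z.2) with hHdef
  have hHcont : Continuous H :=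
    L.continuous.comp ((hfc.comp continuous_fst).sub (hgc.comp continuous_snd))
  have hHne : ∀ z, H z ≠ 0 := by
    intro z hz
    apply hfg z.1 z.2
    have h0 : L (f z.1 - g z.2) = L 0 := by rw [map_zero]; exact hz
    exact sub_eq_zero.mp (hLinj h0)
  haveI : Nonempty TT := ⟨(⟨0, by norm_num⟩, ⟨0, by norm_num⟩)⟩
  obtain ⟨z₀, -, hz₀⟩ := isCompact_univ.exists_isMinOn Set.univ_nonempty
    hHcont.norm.continuousOn
  have hm₀ : 0 < ‖H z₀‖ := norm_pos_iff.mpr (hHne z₀)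
  have hbnd : ∀ z, ‖H z₀‖ ≤ ‖H z‖ := fun z => hz₀ (Set.mem_univ z)
  obtain ⟨Θ, hΘc, hΘ⟩ := contLog hHcont hm₀ hbnd
  -- the closeness estimate
  have hest : ∀ a c : Set.Icc (0:ℝ) 1,
      ‖H (a, c) - Complex.mk ((a:ℝ) - s₀) (t₀ - (c:ℝ))‖ < m := by
    intro a c
    have hfa := hf a
    have hga := hg c
    rw [dist_eq_norm] at hfa hga
    have h1 : H (a,c) - Complex.mk ((a:ℝ) - s₀) (t₀ - (c:ℝ))
        = L ((f a - (p₁ + (a:ℝ) • (q₁ - p₁))) - (g c - (p₂ + (c:ℝ) • (q₂ - p₂)))) := by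
      rw [show (f a - (p₁ + (a:ℝ) • (q₁ - p₁))) - (g c - (p₂ + (c:ℝ) • (q₂ - p₂)))
          = (f a - g c) - ((p₁ + (a:ℝ) • (q₁ - p₁)) - (p₂ + (c:ℝ) • (q₂ - p₂))) by module,
        map_sub, hLval]
    rw [h1]
    have h2 : ‖L ((f a - (p₁ + (a:ℝ) • (q₁ - p₁))) - (g c - (p₂ + (c:ℝ) • (q₂ - p₂))))‖
        ≤ C * (‖f a - (p₁ + (a:ℝ) • (q₁ - p₁))‖ + ‖g c - (p₂ + (c:ℝ) • (q₂ - p₂))‖) :=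
      le_trans (L.le_opNorm _) (mul_le_mul_of_nonneg_left (norm_sub_le _ _) hC0)
    have hDpos : 0 < m/(2*C+1) := by positivity
    have h3 : C * (‖f a - (p₁ + (a:ℝ) • (q₁ - p₁))‖ + ‖g c - (p₂ + (c:ℝ) • (q₂ - p₂))‖)
        ≤ C * (m/(2*C+1) + m/(2*C+1)) :=
      mul_le_mul_of_nonneg_left (by linarith) hC0
    have h4 : C * (m/(2*C+1) + m/(2*C+1)) + m/(2*C+1) = m := by
      field_simp
      ring
    linarith
  set P : ℝ → Set.Icc (0:ℝ) 1 := Set.projIcc 0 1 zero_le_one with hPdef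
  have hP : ∀ s, s ∈ Set.Icc (0:ℝ) 1 → ((P s : ℝ)) = s := by
    intro s hs
    rw [hPdef, Set.projIcc_of_mem _ hs]
  have h01 : (0:ℝ) ∈ Set.Icc (0:ℝ) 1 := ⟨le_refl 0, zero_le_one⟩
  have h11 : (1:ℝ) ∈ Set.Icc (0:ℝ) 1 := ⟨zero_le_one, le_refl 1⟩
  -- the four side conditions
  have hbot : ∀ s ∈ Set.Icc (0:ℝ) 1, 0 < Real.sin ((Θ (P s, P 0)).im) := by
    intro s hs
    have he := hest (P s) (P 0)
    have him := Complex.abs_im_le_norm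
      (H (P s, P 0) - Complex.mk ((P s : ℝ) - s₀) (t₀ - (P 0 : ℝ)))
    have hsub : (H (P s, P 0) - Complex.mk ((P s : ℝ) - s₀) (t₀ - (P 0 : ℝ))).im
        = (H (P s, P 0)).im - (t₀ - (P 0 : ℝ)) := by simp [Complex.sub_im]
    rw [hsub] at him
    have habs := abs_lt.mp (lt_of_le_of_lt him he)
    have h0' : ((P 0 : ℝ)) = 0 := hP 0 h01
    have hHim : 0 < (H (P s, P 0)).im := by
      rw [h0'] at habs
      rcases habs with ⟨hl, hr⟩
      linarith
    exact sin_pos_of_im_pos (hΘ (P s, P 0)) hHim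
  have htop : ∀ s ∈ Set.Icc (0:ℝ) 1, Real.sin ((Θ (P s, P 1)).im) < 0 := by
    intro s hs
    have he := hest (P s) (P 1)
    have him := Complex.abs_im_le_norm
      (H (P s, P 1) - Complex.mk ((P s : ℝ) - s₀) (t₀ - (P 1 : ℝ)))
    have hsub : (H (P s, P 1) - Complex.mk ((P s : ℝ) - s₀) (t₀ - (P 1 : ℝ))).im
        = (H (P s, P 1)).im - (t₀ - (P 1 : ℝ)) := by simp [Complex.sub_im]
    rw [hsub] at him
    have habs := abs_lt.mp (lt_of_le_of_lt him he)
    have h1' : ((P 1 : ℝ)) = 1 := hP 1 h11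
    have hHim : (H (P s, P 1)).im < 0 := by
      rw [h1'] at habs
      rcases habs with ⟨hl, hr⟩
      linarith
    exact sin_neg_of_im_neg (hΘ (P s, P 1)) hHim
  have hright : ∀ t ∈ Set.Icc (0:ℝ) 1, 0 < Real.cos ((Θ (P 1, P t)).im) := by
    intro t ht
    have he := hest (P 1) (P t)
    have hre := Complex.abs_re_le_norm
      (H (P 1, P t) - Complex.mk ((P 1 : ℝ) - s₀) (t₀ - (P t : ℝ)))
    have hsub : (H (P 1, P t) - Complex.mk ((P 1 : ℝ) - s₀) (t₀ - (P t : ℝ))).re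
        = (H (P 1, P t)).re - ((P 1 : ℝ) - s₀) := by simp [Complex.sub_re]
    rw [hsub] at hre
    have habs := abs_lt.mp (lt_of_le_of_lt hre he)
    have h1' : ((P 1 : ℝ)) = 1 := hP 1 h11
    have hHre : 0 < (H (P 1, P t)).re := by
      rw [h1'] at habs
      rcases habs with ⟨hl, hr⟩
      linarith
    exact cos_pos_of_re_pos (hΘ (P 1, P t)) hHre
  have hleft : ∀ t ∈ Set.Icc (0:ℝ) 1, Real.cos ((Θ (P 0, P t)).im) < 0 := by
    intro t ht
    have he := hest (P 0) (P t)
    have hre := Complex.abs_re_le_norm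
      (H (P 0, P t) - Complex.mk ((P 0 : ℝ) - s₀) (t₀ - (P t : ℝ)))
    have hsub : (H (P 0, P t) - Complex.mk ((P 0 : ℝ) - s₀) (t₀ - (P t : ℝ))).re
        = (H (P 0, P t)).re - ((P 0 : ℝ) - s₀) := by simp [Complex.sub_re]
    rw [hsub] at hre
    have habs := abs_lt.mp (lt_of_le_of_lt hre he)
    have h0' : ((P 0 : ℝ)) = 0 := hP 0 h01
    have hHre : (H (P 0, P t)).re < 0 := by
      rw [h0'] at habs
      rcases habs with ⟨hl, hr⟩
      linarith
    exact cos_neg_of_re_neg (hΘ (P 0, P t)) hHre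
  -- intermediate value packaging for the four sides
  have hIVTa : ∀ w ∈ Set.uIcc ((Θ (P 0, P 0)).im) ((Θ (P 1, P 0)).im),
      ∃ s ∈ Set.Icc (0:ℝ) 1, (Θ (P s, P 0)).im = w := by
    intro w hw
    have hcontf : ContinuousOn (fun s : ℝ => (Θ (P s, P 0)).im) (Set.uIcc 0 1) :=
      (Complex.continuous_im.comp (hΘc.comp
        ((continuous_projIcc.prodMk continuous_const)))).continuousOn
    obtain ⟨s, hs, hws⟩ := intermediate_value_uIcc hcontf hw
    exact ⟨s, by rwa [Set.uIcc_of_le zero_le_one] at hs, hws⟩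
  have hIVTb : ∀ w ∈ Set.uIcc ((Θ (P 1, P 0)).im) ((Θ (P 1, P 1)).im),
      ∃ t ∈ Set.Icc (0:ℝ) 1, (Θ (P 1, P t)).im = w := by
    intro w hw
    have hcontf : ContinuousOn (fun t : ℝ => (Θ (P 1, P t)).im) (Set.uIcc 0 1) :=
      (Complex.continuous_im.comp (hΘc.comp
        ((continuous_const.prodMk continuous_projIcc)))).continuousOn
    obtain ⟨t, ht, hwt⟩ := intermediate_value_uIcc hcontf hw
    exact ⟨t, by rwa [Set.uIcc_of_le zero_le_one] at ht, hwt⟩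
  have hIVTc : ∀ w ∈ Set.uIcc ((Θ (P 0, P 1)).im) ((Θ (P 1, P 1)).im),
      ∃ s ∈ Set.Icc (0:ℝ) 1, (Θ (P s, P 1)).im = w := by
    intro w hw
    have hcontf : ContinuousOn (fun s : ℝ => (Θ (P s, P 1)).im) (Set.uIcc 0 1) :=
      (Complex.continuous_im.comp (hΘc.comp
        ((continuous_projIcc.prodMk continuous_const)))).continuousOn
    obtain ⟨s, hs, hws⟩ := intermediate_value_uIcc hcontf hw
    exact ⟨s, by rwa [Set.uIcc_of_le zero_le_one] at hs, hws⟩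
  have hIVTd : ∀ w ∈ Set.uIcc ((Θ (P 0, P 0)).im) ((Θ (P 0, P 1)).im),
      ∃ t ∈ Set.Icc (0:ℝ) 1, (Θ (P 0, P t)).im = w := by
    intro w hw
    have hcontf : ContinuousOn (fun t : ℝ => (Θ (P 0, P t)).im) (Set.uIcc 0 1) :=
      (Complex.continuous_im.comp (hΘc.comp
        ((continuous_const.prodMk continuous_projIcc)))).continuousOn
    obtain ⟨t, ht, hwt⟩ := intermediate_value_uIcc hcontf hw
    exact ⟨t, by rwa [Set.uIcc_of_le zero_le_one] at ht, hwt⟩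
  -- walk around the square
  have hcA_sin : 0 < Real.sin ((Θ (P 0, P 0)).im) := hbot 0 h01
  have hcA_cos : Real.cos ((Θ (P 0, P 0)).im) < 0 := hleft 0 h01
  obtain ⟨k, hk1, hk2⟩ := exists_band hcA_sin hcA_cos
  have hstep1 := corner_step k 0 ((Θ (P 0, P 0)).im) ((Θ (P 1, P 0)).im)
    (by linarith) (by linarith)
    (by intro w hw
        obtain ⟨s, hs, rfl⟩ := hIVTa w hw
        simpa using hbot s hs)
    (by simpa using hbot 1 h11)
    (by simpa using hright 0 h01)
  have hstep2 := corner_step k (-(π/2)) ((Θ (P 1, P 0)).im) ((Θ (P 1, P 1)).im)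
    (by linarith [hstep1.1]) (by linarith [hstep1.2])
    (by intro w hw
        obtain ⟨t, ht, rfl⟩ := hIVTb w hw
        rw [show (Θ (P 1, P t)).im - (-(π/2)) = (Θ (P 1, P t)).im + π/2 by ring,
          Real.sin_add_pi_div_two]
        exact hright t ht)
    (by rw [show (Θ (P 1, P 1)).im - (-(π/2)) = (Θ (P 1, P 1)).im + π/2 by ring,
          Real.sin_add_pi_div_two]
        exact hright 1 h11)
    (by rw [show (Θ (P 1, P 1)).im - (-(π/2)) = (Θ (P 1, P 1)).im + π/2 by ring,
          Real.cos_add_pi_div_two]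
        have := htop 1 h11
        linarith)
  have hstep3 := corner_step k (-π) ((Θ (P 1, P 1)).im) ((Θ (P 0, P 1)).im)
    (by linarith [hstep2.1]) (by linarith [hstep2.2])
    (by intro w hw
        rw [Set.uIcc_comm] at hw
        obtain ⟨s, hs, rfl⟩ := hIVTc w hw
        rw [show (Θ (P s, P 1)).im - (-π) = (Θ (P s, P 1)).im + π by ring,
          Real.sin_add_pi]
        have := htop s hs
        linarith)
    (by rw [show (Θ (P 0, P 1)).im - (-π) = (Θ (P 0, P 1)).im + π by ring,
          Real.sin_add_pi]
        have := htop 0 h01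
        linarith)
    (by rw [show (Θ (P 0, P 1)).im - (-π) = (Θ (P 0, P 1)).im + π by ring,
          Real.cos_add_pi]
        have := hleft 1 h11
        linarith)
  have hstep4 := corner_step k (-(3*π/2)) ((Θ (P 0, P 1)).im) ((Θ (P 0, P 0)).im)
    (by linarith [hstep3.1]) (by linarith [hstep3.2])
    (by intro w hw
        rw [Set.uIcc_comm] at hw
        obtain ⟨t, ht, rfl⟩ := hIVTd w hw
        rw [show (Θ (P 0, P t)).im - (-(3*π/2)) = ((Θ (P 0, P t)).im + π/2) + π by ring,
          Real.sin_add_pi, Real.sin_add_pi_div_two]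
        have := hleft t ht
        linarith)
    (by rw [show (Θ (P 0, P 0)).im - (-(3*π/2)) = ((Θ (P 0, P 0)).im + π/2) + π by ring,
          Real.sin_add_pi, Real.sin_add_pi_div_two]
        linarith)
    (by rw [show (Θ (P 0, P 0)).im - (-(3*π/2)) = ((Θ (P 0, P 0)).im + π/2) + π by ring,
          Real.cos_add_pi, Real.cos_add_pi_div_two]
        linarith)
  have hfin := hstep4.2
  have hpi := Real.pi_pos
  linarith
end

section
/- (Sieklucki, 1969) For each n ≥ 1, every continuous map f : Iⁿ → Iⁿ of the n-cube Iⁿ = [0,1]ⁿ ⊂ ℝⁿ is embeddable in ℝ^{2n}: there exists a continuous injective map ψ : Iⁿ → ℝ^{2n} such that ψ ∘ f is approximable by embeddings, i.e., for every ε > 0 there is a continuous injective map g : Iⁿ → ℝ^{2n} with dist(g x, ψ(f x)) < ε for all x. -/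
/-- Sieklucki, 1969: For each n ≥ 1, every continuous self-map of the n-cube
Iⁿ = [0,1]ⁿ ⊂ ℝⁿ is embeddable in ℝ^{2n}. -/
theorem stmt_8 (n : ℕ) (hn : 1 ≤ n)
    (C : Set (EuclideanSpace ℝ (Fin n)))
    (hC : C = {x : EuclideanSpace ℝ (Fin n) | ∀ i, x i ∈ Set.Icc (0 : ℝ) 1})
    (f : C → C) (hf : Continuous f) :
    ∃ ψ : C → EuclideanSpace ℝ (Fin (2 * n)),
      Continuous ψ ∧ Function.Injective ψ ∧
      ∀ ε > (0 : ℝ), ∃ g : C → EuclideanSpace ℝ (Fin (2 * n)),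
        Continuous g ∧ Function.Injective g ∧ ∀ x, dist (g x) (ψ (f x)) < ε := by
  classical
  -- ψ x = (x, 0)
  set ψ : C → EuclideanSpace ℝ (Fin (2 * n)) :=
    fun x => WithLp.toLp 2 (fun i : Fin (2 * n) => if h : (i : ℕ) < n then (x : EuclideanSpace ℝ (Fin n)) ⟨i, h⟩ else 0)
    with hψ
  have hψcont : Continuous ψ := by
    apply (PiLp.continuous_toLp 2 _).comp
    apply continuous_pi
    intro i
    by_cases h : (i : ℕ) < n
    · simp [hψ, h]; exact ((PiLp.continuous_apply 2 _ (⟨i, h⟩ : Fin n))).comp continuous_subtype_val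
    · simpa [hψ, h] using continuous_const
  have hψinj : Function.Injective ψ := by
    intro x y hxy
    apply Subtype.ext
    ext j
    have := congrFun (congrArg WithLp.ofLp hxy) ⟨j, by omega⟩
    simpa [hψ, j.isLt] using this
  refine ⟨ψ, hψcont, hψinj, ?_⟩
  intro ε hε
  set δ : ℝ := ε / (2 * n + 1) with hδ
  have hδpos : 0 < δ := by positivity
  -- g x = (f x, δ • x)
  set g : C → EuclideanSpace ℝ (Fin (2 * n)) :=
    fun x => WithLp.toLp 2 fun i : Fin (2 * n) =>
      if h : (i : ℕ) < n then ((f x : EuclideanSpace ℝ (Fin n)) ⟨i, h⟩)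
      else δ * (x : EuclideanSpace ℝ (Fin n)) ⟨(i : ℕ) - n, by omega⟩
    with hg
  have hgcont : Continuous g := by
    apply (PiLp.continuous_toLp 2 _).comp
    apply continuous_pi
    intro i
    by_cases h : (i : ℕ) < n
    · simp [hg, h]; exact
        (((PiLp.continuous_apply 2 _ (⟨i, h⟩ : Fin n))).comp continuous_subtype_val).comp hf
    · simp [hg, h]; exact
        (continuous_const.mul
          (((PiLp.continuous_apply 2 _ (⟨(i : ℕ) - n, by omega⟩ : Fin n))).comp continuous_subtype_val))
  have hginj : Function.Injective g := by
    intro x y hxy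
    apply Subtype.ext
    ext j
    have hlt : ¬ (n + (j : ℕ) < n) := by omega
    have := congrFun (congrArg WithLp.ofLp hxy) ⟨n + j, by omega⟩
    simp only [hg, hlt, dif_neg, not_false_iff] at this
    have h2 : δ * (x : EuclideanSpace ℝ (Fin n)) ⟨n + (j : ℕ) - n, by omega⟩
        = δ * (y : EuclideanSpace ℝ (Fin n)) ⟨n + (j : ℕ) - n, by omega⟩ := this
    have h3 := mul_left_cancel₀ (ne_of_gt hδpos) h2
    have hj : (⟨n + (j : ℕ) - n, by omega⟩ : Fin n) = j := Fin.ext (by simp)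
    rw [hj] at h3
    exact h3
  refine ⟨g, hgcont, hginj, ?_⟩
  intro x
  have hxmem : ∀ i, (x : EuclideanSpace ℝ (Fin n)) i ∈ Set.Icc (0 : ℝ) 1 := by
    have h := x.2
    simp only [hC, Set.mem_setOf_eq] at h
    exact h
  have hbound : ∀ i : Fin (2 * n), dist (g x i) (ψ (f x) i) ^ 2 ≤ δ ^ 2 := by
    intro i
    by_cases h : (i : ℕ) < n
    · have he : g x i = ψ (f x) i := by simp [hg, hψ, h]
      rw [he, dist_self]
      nlinarith [sq_nonneg δ]
    · simp only [hg, hψ, h, dif_neg, not_false_iff]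
      rw [Real.dist_eq, sub_zero]
      have h1 := hxmem ⟨(i : ℕ) - n, by omega⟩
      have h2 : |δ * (x : EuclideanSpace ℝ (Fin n)) ⟨(i : ℕ) - n, by omega⟩| ≤ δ := by
        rw [abs_mul, abs_of_pos hδpos]
        have : |(x : EuclideanSpace ℝ (Fin n)) ⟨(i : ℕ) - n, by omega⟩| ≤ 1 :=
          abs_le.2 ⟨by linarith [h1.1], h1.2⟩
        nlinarith
      nlinarith [h2, abs_nonneg (δ * (x : EuclideanSpace ℝ (Fin n)) ⟨(i : ℕ) - n, by omega⟩)]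
  have hsum : (∑ i : Fin (2 * n), dist (g x i) (ψ (f x) i) ^ 2) ≤ (2 * n) * δ ^ 2 := by
    calc (∑ i : Fin (2 * n), dist (g x i) (ψ (f x) i) ^ 2)
        ≤ ∑ _i : Fin (2 * n), δ ^ 2 := Finset.sum_le_sum fun i _ => hbound i
      _ = (2 * n) * δ ^ 2 := by simp [Finset.sum_const, mul_comm]
  have hdist : dist (g x) (ψ (f x)) ≤ Real.sqrt ((2 * n) * δ ^ 2) := by
    rw [EuclideanSpace.dist_eq]
    exact Real.sqrt_le_sqrt hsum
  have hsqrt : Real.sqrt ((2 * n) * δ ^ 2) = Real.sqrt (2 * n) * δ := by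
    rw [Real.sqrt_mul (by positivity), Real.sqrt_sq hδpos.le]
  have hn2 : Real.sqrt (2 * n) ≤ 2 * n := by
    have h1 : (1 : ℝ) ≤ 2 * n := by
      have : (1 : ℝ) ≤ (n : ℝ) := by exact_mod_cast hn
      linarith
    calc Real.sqrt (2 * n) ≤ Real.sqrt ((2 * n) * (2 * n)) :=
          Real.sqrt_le_sqrt (by nlinarith)
      _ = 2 * n := Real.sqrt_mul_self (by linarith)
  have hfin : Real.sqrt (2 * n) * δ < ε := by
    have h1 : Real.sqrt (2 * n) * δ ≤ (2 * n) * δ :=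
      mul_le_mul_of_nonneg_right hn2 hδpos.le
    have h2 : (2 * n : ℝ) * δ < (2 * n + 1) * δ := by nlinarith [hδpos]
    have h3 : (2 * (n:ℝ) + 1) * δ = ε := by
      rw [hδ]; field_simp
    linarith
  rw [hsqrt] at hdist
  linarith
end

section
/- Let G be a compact metric space, φ : G → ℝ² continuous, and a ≥ 0. If there exists a continuous injective map f : G → ℝ² with dist(f x, φ x) ≤ a for all x ∈ G, then there exists a continuous equivariant map g : G̃ → S¹ (g(y,x) = −g(x,y)) whose restriction to the set A = {(x,y) ∈ G × G : dist(φ x, φ y) > 2a} is equivariantly homotopic to the Gauss map φ̃(x,y) = (φ x − φ y)/‖φ x − φ y‖ on A. (In the notation of the paper, a(φ) ≥ b(φ)/2.) -/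
/-- If φ : G → ℝ² admits an a-close continuous injective map, then there is a
continuous equivariant map g from the deleted product of G to S¹ whose restriction to
A = {(x,y) : dist (φ x, φ y) > 2a} is equivariantly homotopic to the Gauss map of φ on A.
(In the notation of the paper, a(φ) ≥ b(φ)/2.) -/
theorem stmt_14 {G : Type*} [MetricSpace G] [CompactSpace G]
    (φ : G → EuclideanSpace ℝ (Fin 2)) (hφ : Continuous φ) (a : ℝ) (ha : 0 ≤ a)
    (hemb : ∃ f : G → EuclideanSpace ℝ (Fin 2),
      Continuous f ∧ Function.Injective f ∧ ∀ x, dist (f x) (φ x) ≤ a) :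
    ∃ g : {p : G × G // p.1 ≠ p.2} → Metric.sphere (0 : EuclideanSpace ℝ (Fin 2)) 1,
      Continuous g ∧
      (∀ p q : {p : G × G // p.1 ≠ p.2}, q.1 = (p.1.2, p.1.1) →
        (g q : EuclideanSpace ℝ (Fin 2)) = -(g p : EuclideanSpace ℝ (Fin 2))) ∧
      ∃ H : Set.Icc (0 : ℝ) 1 × {p : G × G // dist (φ p.1) (φ p.2) > 2 * a} →
          Metric.sphere (0 : EuclideanSpace ℝ (Fin 2)) 1,
        Continuous H ∧
        (∀ p : {p : G × G // dist (φ p.1) (φ p.2) > 2 * a},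
          H (⟨0, by norm_num⟩, p) = g ⟨p.1, fun h => by
            have h2 := p.2; rw [h] at h2; simp [dist_self] at h2; linarith⟩) ∧
        (∀ p : {p : G × G // dist (φ p.1) (φ p.2) > 2 * a},
          (H (⟨1, by norm_num⟩, p) : EuclideanSpace ℝ (Fin 2)) =
            ‖φ p.1.1 - φ p.1.2‖⁻¹ • (φ p.1.1 - φ p.1.2)) ∧
        (∀ (t : Set.Icc (0 : ℝ) 1) (p q : {p : G × G // dist (φ p.1) (φ p.2) > 2 * a}),
          q.1 = (p.1.2, p.1.1) →
          (H (t, q) : EuclideanSpace ℝ (Fin 2)) = -(H (t, p) : EuclideanSpace ℝ (Fin 2))) := by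
  obtain ⟨f, hf, hfi, hfa⟩ := hemb
  have hmem : ∀ v : EuclideanSpace ℝ (Fin 2), v ≠ 0 →
      ‖v‖⁻¹ • v ∈ Metric.sphere (0 : EuclideanSpace ℝ (Fin 2)) 1 := by
    intro v hv
    rw [mem_sphere_zero_iff_norm, norm_smul, norm_inv, norm_norm,
      inv_mul_cancel₀ (norm_ne_zero_iff.2 hv)]
  have hne : ∀ p : {p : G × G // p.1 ≠ p.2}, f p.1.1 - f p.1.2 ≠ 0 := fun p =>
    sub_ne_zero.2 (fun h => p.2 (hfi h))
  -- the interpolation vector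
  set v : Set.Icc (0 : ℝ) 1 × {p : G × G // dist (φ p.1) (φ p.2) > 2 * a} →
      EuclideanSpace ℝ (Fin 2) := fun q =>
    (q.1 : ℝ) • (φ q.2.1.1 - φ q.2.1.2) + (1 - (q.1 : ℝ)) • (f q.2.1.1 - f q.2.1.2) with hv
  have hvne : ∀ q, v q ≠ 0 := by
    intro q h0
    obtain ⟨t, ⟨⟨x, y⟩, hp⟩⟩ := q
    have hxy : 2 * a < ‖φ x - φ y‖ := by
      rwa [dist_eq_norm] at hp
    have h1 : ‖f x - φ x‖ ≤ a := by rw [← dist_eq_norm]; exact hfa x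
    have h2 : ‖f y - φ y‖ ≤ a := by rw [← dist_eq_norm]; exact hfa y
    have ht0 : (0:ℝ) ≤ (t:ℝ) := t.2.1
    have ht1 : (t:ℝ) ≤ 1 := t.2.2
    have hrw : v (t, ⟨(x, y), hp⟩) = (φ x - φ y) + (1 - (t:ℝ)) • ((f x - φ x) - (f y - φ y)) := by
      simp only [hv]
      module
    rw [hrw] at h0
    have heq : φ x - φ y = -((1 - (t:ℝ)) • ((f x - φ x) - (f y - φ y))) := by
      linear_combination (norm := module) h0
    have hnorm : ‖φ x - φ y‖ ≤ 2 * a := by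
      rw [heq, norm_neg, norm_smul, Real.norm_eq_abs, abs_of_nonneg (by linarith)]
      calc (1 - (t:ℝ)) * ‖(f x - φ x) - (f y - φ y)‖
          ≤ 1 * (‖f x - φ x‖ + ‖f y - φ y‖) := by
            apply mul_le_mul (by linarith) (norm_sub_le _ _) (norm_nonneg _) (by norm_num)
        _ ≤ 2 * a := by linarith
    linarith
  have hneg : ∀ w : EuclideanSpace ℝ (Fin 2), ‖-w‖⁻¹ • (-w) = -(‖w‖⁻¹ • w) := by
    intro w; rw [norm_neg, smul_neg]
  refine ⟨fun p => ⟨‖f p.1.1 - f p.1.2‖⁻¹ • (f p.1.1 - f p.1.2), hmem _ (hne p)⟩,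
    ?_, ?_, fun q => ⟨‖v q‖⁻¹ • v q, hmem _ (hvne q)⟩, ?_, ?_, ?_, ?_⟩
  · -- continuity of g
    have hw : Continuous fun p : {p : G × G // p.1 ≠ p.2} => f p.1.1 - f p.1.2 :=
      (hf.comp (continuous_fst.comp continuous_subtype_val)).sub
        (hf.comp (continuous_snd.comp continuous_subtype_val))
    exact Continuous.subtype_mk
      ((hw.norm.inv₀ fun p => norm_ne_zero_iff.2 (hne p)).smul hw) _
  · -- equivariance of g
    intro p q hq
    have h1 : q.1.1 = p.1.2 := by rw [hq]
    have h2 : q.1.2 = p.1.1 := by rw [hq]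
    simp only [h1, h2]
    rw [show f p.1.2 - f p.1.1 = -(f p.1.1 - f p.1.2) by abel, hneg]
  · -- continuity of H
    have hvc : Continuous v := by
      apply Continuous.add
      · exact ((continuous_subtype_val.comp continuous_fst)).smul
          ((hφ.comp (continuous_fst.comp (continuous_subtype_val.comp continuous_snd))).sub
           (hφ.comp (continuous_snd.comp (continuous_subtype_val.comp continuous_snd))))
      · exact (continuous_const.sub
          (continuous_subtype_val.comp continuous_fst)).smul
          ((hf.comp (continuous_fst.comp (continuous_subtype_val.comp continuous_snd))).sub
           (hf.comp (continuous_snd.comp (continuous_subtype_val.comp continuous_snd))))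
    exact Continuous.subtype_mk
      ((hvc.norm.inv₀ fun q => norm_ne_zero_iff.2 (hvne q)).smul hvc) _
  · -- H at 0
    intro p
    apply Subtype.ext
    simp [hv]
  · -- H at 1
    intro p
    simp [hv]
  · -- equivariance of H
    intro t p q hq
    have h1 : q.1.1 = p.1.2 := by rw [hq]
    have h2 : q.1.2 = p.1.1 := by rw [hq]
    show ‖v (t, q)‖⁻¹ • v (t, q) = -(‖v (t, p)‖⁻¹ • v (t, p))
    have : v (t, q) = -(v (t, p)) := by
      simp only [hv, h1, h2]
      module
    rw [this, hneg]
end
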